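/- arXiv:1708.02416 — 6 statements merged into one kernel-verified Lean document; each statement's English description precedes it below -/
import Mathlib

section
/- If G is a connected simple graph on n ≥ 2 vertices, then sg(G) = n if and only if G is isomorphic to the complete graph K_n. -/
open SimpleGraph

/-- `S` is a strong geodetic set of `G` if one can fix, for each pair of vertices of `S`,
a geodesic (shortest path) between them, so that every vertex of `G` lies on one of the
chosen geodesics. -/
def SimpleGraph.IsStrongGeodeticSet {V : Type*} (G : SimpleGraph V) (S : Set V) : Prop :=
  ∃ g : ∀ x ∈ S, ∀ y ∈ S, G.Walk x y,
    (∀ x hx y hy, (g x hx y hy).length = G.dist x y) ∧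
    ∀ v : V, ∃ x hx y hy, v ∈ (g x hx y hy).support

/-- The strong geodetic number of a graph: the minimum cardinality of a strong geodetic set. -/
noncomputable def SimpleGraph.strongGeodeticNumber {V : Type*} [Fintype V]
    (G : SimpleGraph V) : ℕ :=
  sInf {n | ∃ S : Finset V, G.IsStrongGeodeticSet ↑S ∧ S.card = n}

lemma univ_isStrongGeodeticSet {V : Type*} [Fintype V] (G : SimpleGraph V)
    (hconn : G.Connected) : G.IsStrongGeodeticSet ↑(Finset.univ : Finset V) := by
  classical
  refine ⟨fun x _ y _ => ((hconn x y).exists_walk_length_eq_dist).choose,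
    fun x _ y _ => ((hconn x y).exists_walk_length_eq_dist).choose_spec,
    fun v => ⟨v, by simp, v, by simp, SimpleGraph.Walk.start_mem_support _⟩⟩

lemma sg_lt_of_not_top {V : Type*} [Fintype V] (G : SimpleGraph V)
    (hconn : G.Connected) (hn : 2 ≤ Fintype.card V) (hG : G ≠ ⊤) :
    G.strongGeodeticNumber < Fintype.card V := by
  classical
  obtain ⟨u, w, hne, hnadj⟩ : ∃ u w, u ≠ w ∧ ¬ G.Adj u w := by
    by_contra hcon
    push_neg at hcon
    exact hG (by ext x y; simp only [top_adj]; exact ⟨fun h => h.ne, fun h => hcon x y h⟩)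
  obtain ⟨p, hp⟩ := (hconn u w).exists_walk_length_eq_dist
  have hd2 : 2 ≤ G.dist u w := by
    have h0 : G.dist u w ≠ 0 := (hconn.dist_eq_zero_iff.ne).mpr hne
    have h1 : G.dist u w ≠ 1 := fun h => hnadj (SimpleGraph.dist_eq_one_iff_adj.mp h)
    omega
  cases p with
  | nil => exact absurd rfl hne
  | @cons _ b _ h q =>
    have hbu : b ≠ u := h.ne'
    have hbw : b ≠ w := by rintro rfl; exact hnadj h
    -- the key existence of suitable geodesics
    have ex : ∀ x y : V, ∃ r : G.Walk x y, r.length = G.dist x y ∧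
        (x = u → y = w → b ∈ r.support) := by
      intro x y
      by_cases hx : x = u
      · by_cases hy : y = w
        · subst hx; subst hy
          exact ⟨SimpleGraph.Walk.cons h q, hp, fun _ _ => by
            simp [SimpleGraph.Walk.support_cons]⟩
        · obtain ⟨r, hr⟩ := (hconn x y).exists_walk_length_eq_dist
          exact ⟨r, hr, fun _ hy' => absurd hy' hy⟩
      · obtain ⟨r, hr⟩ := (hconn x y).exists_walk_length_eq_dist
        exact ⟨r, hr, fun hx' _ => absurd hx' hx⟩
    set S : Finset V := Finset.univ.erase b with hS
    have hSgeo : G.IsStrongGeodeticSet ↑S := by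
      refine ⟨fun x _ y _ => (ex x y).choose, fun x _ y _ => (ex x y).choose_spec.1, ?_⟩
      intro v
      by_cases hv : v = b
      · refine ⟨u, ?_, w, ?_, ?_⟩
        · simp [hS, hbu.symm]
        · simp [hS, hbw.symm]
        · subst hv; exact (ex u w).choose_spec.2 rfl rfl
      · exact ⟨v, by simp [hS, hv], v, by simp [hS, hv],
          SimpleGraph.Walk.start_mem_support _⟩
    have hcard : S.card = Fintype.card V - 1 := by
      simp [hS, Finset.card_erase_of_mem, Finset.card_univ]
    have hle : G.strongGeodeticNumber ≤ Fintype.card V - 1 :=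
      Nat.sInf_le ⟨S, hSgeo, hcard⟩
    omega

/-- If `G` is a connected simple graph on `n ≥ 2` vertices, then `sg(G) = n` iff `G ≅ K_n`. -/
theorem sg_eq_card_iff_complete {V : Type*} [Fintype V] (G : SimpleGraph V)
    (hconn : G.Connected) (hn : 2 ≤ Fintype.card V) :
    G.strongGeodeticNumber = Fintype.card V ↔
      Nonempty (G ≃g completeGraph (Fin (Fintype.card V))) := by
  classical
  have key : G.strongGeodeticNumber = Fintype.card V ↔ G = ⊤ := by
    constructor
    · intro hsg
      by_contra hG
      exact absurd hsg (sg_lt_of_not_top G hconn hn hG).ne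
    · intro hG
      subst hG
      have hset : {n | ∃ S : Finset V, (⊤ : SimpleGraph V).IsStrongGeodeticSet ↑S ∧ S.card = n}
          = {Fintype.card V} := by
        ext k
        simp only [Set.mem_setOf_eq, Set.mem_singleton_iff]
        constructor
        · rintro ⟨S, ⟨g, hlen, hcov⟩, rfl⟩
          have : S = Finset.univ := by
            refine Finset.eq_univ_iff_forall.mpr fun v => ?_
            obtain ⟨x, hx, y, hy, hv⟩ := hcov v
            obtain ⟨q, r, hqr⟩ := SimpleGraph.Walk.mem_support_iff_exists_append.mp hv
            have hdle : (⊤ : SimpleGraph V).dist x y ≤ 1 := by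
              by_cases hxy : x = y
              · subst hxy; simp [SimpleGraph.dist_self]
              · exact le_of_eq (SimpleGraph.dist_eq_one_iff_adj.mpr (by simp [hxy]))
            have hlen' : q.length + r.length ≤ 1 := by
              have := hlen x hx y hy
              rw [hqr, SimpleGraph.Walk.length_append] at this
              omega
            rcases Nat.eq_zero_or_pos q.length with h0 | hpos
            · have : x = v := SimpleGraph.Walk.eq_of_length_eq_zero h0
              exact this ▸ hx
            · have : v = y := SimpleGraph.Walk.eq_of_length_eq_zero (p := r) (by omega)
              exact this ▸ hy
          simp [this]
        · rintro rfl
          exact ⟨Finset.univ, univ_isStrongGeodeticSet _ hconn, Finset.card_univ⟩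
      rw [SimpleGraph.strongGeodeticNumber, hset, csInf_singleton]
  rw [key]
  constructor
  · rintro rfl
    exact ⟨SimpleGraph.Iso.completeGraph (Fintype.equivFin V)⟩
  · rintro ⟨f⟩
    ext x y
    simp only [top_adj]
    constructor
    · exact fun h => h.ne
    · intro hxy
      have := f.map_adj_iff (v := x) (w := y)
      rw [← this]
      simp only [completeGraph_eq_top, top_adj, ne_eq]
      exact fun hf => hxy (f.toEquiv.injective hf)
end

section
/- Let n ≥ 6 and let K_{n,n} have bipartition (X, Y). Suppose T = T₁ ∪ T₂ is a strong geodetic set of K_{n,n} with T₁ ⊆ X, T₂ ⊆ Y, t₁ = |T₁|, t₂ = |T₂|, and |t₁ − t₂| ≥ 2. Then there exists a strong geodetic set T' = T'₁ ∪ T'₂ of K_{n,n} with T'₁ ⊆ X, T'₂ ⊆ Y such that |T'| = |T| and ||T'₁| − |T'₂|| < |t₁ − t₂|. -/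
open SimpleGraph Sum Finset

variable {α β : Type*}

lemma cbg_adj_lr (a : α) (b : β) : (completeBipartiteGraph α β).Adj (inl a) (inr b) := by simp
lemma cbg_adj_rl (a : α) (b : β) : (completeBipartiteGraph α β).Adj (inr b) (inl a) := by simp

lemma cbg_dist_lr (a : α) (b : β) : (completeBipartiteGraph α β).dist (inl a) (inr b) = 1 :=
  dist_eq_one_iff_adj.mpr (cbg_adj_lr a b)

lemma cbg_dist_rl (a : α) (b : β) : (completeBipartiteGraph α β).dist (inr b) (inl a) = 1 :=
  dist_eq_one_iff_adj.mpr (cbg_adj_rl a b)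

lemma cbg_dist_ll [Nonempty β] {a b : α} (h : a ≠ b) :
    (completeBipartiteGraph α β).dist (inl a) (inl b) = 2 := by
  obtain ⟨m⟩ := ‹Nonempty β›
  have w : (completeBipartiteGraph α β).Walk (inl a) (inl b) :=
    Walk.cons (cbg_adj_lr a m) (Walk.cons (cbg_adj_rl b m) Walk.nil)
  have h2 := dist_le (Walk.cons (cbg_adj_lr a m) (Walk.cons (cbg_adj_rl b m) Walk.nil))
  simp only [Walk.length_cons, Walk.length_nil] at h2
  have h0 : 0 < (completeBipartiteGraph α β).dist (inl a) (inl b) :=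
    Reachable.pos_dist_of_ne ⟨w⟩ (by simp [h])
  have h1 : (completeBipartiteGraph α β).dist (inl a) (inl b) ≠ 1 := by
    intro hc
    exact (by simp : ¬ (completeBipartiteGraph α β).Adj (inl a) (inl b))
      (dist_eq_one_iff_adj.mp hc)
  omega

lemma cbg_dist_rr [Nonempty α] {a b : β} (h : a ≠ b) :
    (completeBipartiteGraph α β).dist (inr a) (inr b) = 2 := by
  obtain ⟨m⟩ := ‹Nonempty α›
  have w : (completeBipartiteGraph α β).Walk (inr a) (inr b) :=
    Walk.cons (cbg_adj_rl m a) (Walk.cons (cbg_adj_lr m b) Walk.nil)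
  have h2 := dist_le (Walk.cons (cbg_adj_rl m a) (Walk.cons (cbg_adj_lr m b) Walk.nil))
  simp only [Walk.length_cons, Walk.length_nil] at h2
  have h0 : 0 < (completeBipartiteGraph α β).dist (inr a) (inr b) :=
    Reachable.pos_dist_of_ne ⟨w⟩ (by simp [h])
  have h1 : (completeBipartiteGraph α β).dist (inr a) (inr b) ≠ 1 := by
    intro hc
    exact (by simp : ¬ (completeBipartiteGraph α β).Adj (inr a) (inr b))
      (dist_eq_one_iff_adj.mp hc)
  omega

lemma walk_support_of_length_one {V : Type*} {G : SimpleGraph V} {u v : V}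
    (w : G.Walk u v) (h : w.length = 1) : w.support = [u, v] := by
  cases w with
  | nil => simp at h
  | cons h' p =>
    cases p with
    | nil => simp
    | cons h'' q => simp at h

lemma walk_support_of_length_two {V : Type*} {G : SimpleGraph V} {u v : V}
    (w : G.Walk u v) (h : w.length = 2) :
    ∃ m, G.Adj u m ∧ G.Adj m v ∧ w.support = [u, m, v] := by
  cases w with
  | nil => simp at h
  | cons h' p =>
    cases p with
    | nil => simp at h
    | cons h'' q =>
      cases q with
      | nil => exact ⟨_, h', h'', by simp⟩
      | cons h''' r => simp at h

lemma mem_S_inl {n : ℕ} {T₁ T₂ : Finset (Fin n)} {a : Fin n} :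
    (inl a : Fin n ⊕ Fin n) ∈ ((T₁.image Sum.inl ∪ T₂.image Sum.inr : Finset (Fin n ⊕ Fin n)) :
      Set (Fin n ⊕ Fin n)) ↔ a ∈ T₁ := by simp

lemma mem_S_inr {n : ℕ} {T₁ T₂ : Finset (Fin n)} {b : Fin n} :
    (inr b : Fin n ⊕ Fin n) ∈ ((T₁.image Sum.inl ∪ T₂.image Sum.inr : Finset (Fin n ⊕ Fin n)) :
      Set (Fin n ⊕ Fin n)) ↔ b ∈ T₂ := by simp

lemma walk_support_of_length_zero {V : Type*} {G : SimpleGraph V} {u : V}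
    (w : G.Walk u u) (h : w.length = 0) : w.support = [u] := by
  cases w with
  | nil => simp
  | cons h' p => simp at h

lemma forward₁ (n : ℕ) (hn : 0 < n) (T₁ T₂ : Finset (Fin n))
    (hT : (completeBipartiteGraph (Fin n) (Fin n)).IsStrongGeodeticSet
      ((T₁.image Sum.inl ∪ T₂.image Sum.inr : Finset (Fin n ⊕ Fin n)) : Set (Fin n ⊕ Fin n))) :
    (univ \ T₂).card ≤ T₁.offDiag.card := by
  classical
  have : Nonempty (Fin n) := ⟨⟨0, hn⟩⟩
  obtain ⟨g, hlen, hcov⟩ := hT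
  let P : Fin n → Fin n × Fin n → Prop := fun v p => p ∈ T₁.offDiag ∧
    ∀ (h1 : (inl p.1 : Fin n ⊕ Fin n) ∈
        ((T₁.image Sum.inl ∪ T₂.image Sum.inr : Finset (Fin n ⊕ Fin n)) : Set (Fin n ⊕ Fin n)))
      (h2 : (inl p.2 : Fin n ⊕ Fin n) ∈
        ((T₁.image Sum.inl ∪ T₂.image Sum.inr : Finset (Fin n ⊕ Fin n)) : Set (Fin n ⊕ Fin n))),
      (inr v : Fin n ⊕ Fin n) ∈ (g (inl p.1) h1 (inl p.2) h2).support
  have claim : ∀ v ∈ univ \ T₂, ∃ p, P v p := by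
    intro v hv
    have hv2 : v ∉ T₂ := by simpa using hv
    obtain ⟨x, hx, y, hy, hm⟩ := hcov (inr v)
    have hl := hlen x hx y hy
    rcases x with a | a <;> rcases y with b | b
    · -- inl a, inl b
      by_cases hab : a = b
      · subst hab
        rw [SimpleGraph.dist_self] at hl
        rw [walk_support_of_length_zero _ hl] at hm
        simp at hm
      · rw [cbg_dist_ll hab] at hl
        refine ⟨(a, b), Finset.mem_offDiag.mpr ⟨mem_S_inl.mp hx, mem_S_inl.mp hy, hab⟩, ?_⟩
        intro h1 h2; exact hm
    · rw [cbg_dist_lr] at hl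
      rw [walk_support_of_length_one _ hl] at hm
      simp at hm
      exact absurd (hm ▸ mem_S_inr.mp hy) hv2
    · rw [cbg_dist_rl] at hl
      rw [walk_support_of_length_one _ hl] at hm
      simp at hm
      exact absurd (hm ▸ mem_S_inr.mp hx) hv2
    · by_cases hab : a = b
      · subst hab
        rw [SimpleGraph.dist_self] at hl
        rw [walk_support_of_length_zero _ hl] at hm
        simp at hm
        exact absurd (hm ▸ mem_S_inr.mp hx) hv2
      · rw [cbg_dist_rr hab] at hl
        obtain ⟨m, hadj1, hadj2, hsup⟩ := walk_support_of_length_two _ hl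
        rw [hsup] at hm
        rcases m with c | c
        · simp at hm
          rcases hm with h | h
          · exact absurd (h ▸ mem_S_inr.mp hx) hv2
          · exact absurd (h ▸ mem_S_inr.mp hy) hv2
        · simp at hadj1
  have hPmid : ∀ v p, P v p → ∀ v', P v' p → v = v' := by
    intro v p hp v' hp'
    obtain ⟨hpd, hsup⟩ := hp
    obtain ⟨-, hsup'⟩ := hp'
    obtain ⟨ha, hb, hab⟩ := Finset.mem_offDiag.mp hpd
    have h1 : (inl p.1 : Fin n ⊕ Fin n) ∈
        ((T₁.image Sum.inl ∪ T₂.image Sum.inr : Finset (Fin n ⊕ Fin n)) :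
          Set (Fin n ⊕ Fin n)) := mem_S_inl.mpr ha
    have h2 : (inl p.2 : Fin n ⊕ Fin n) ∈
        ((T₁.image Sum.inl ∪ T₂.image Sum.inr : Finset (Fin n ⊕ Fin n)) :
          Set (Fin n ⊕ Fin n)) := mem_S_inl.mpr hb
    have hl := hlen (inl p.1) h1 (inl p.2) h2
    rw [cbg_dist_ll hab] at hl
    obtain ⟨m, hadj1, hadj2, hsupeq⟩ := walk_support_of_length_two _ hl
    have e1 := hsup h1 h2
    have e2 := hsup' h1 h2
    rw [hsupeq] at e1 e2
    rcases m with c | c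
    · simp at hadj1
    · simp at e1 e2
      exact e1.trans e2.symm
  haveI : ∀ v, Decidable (∃ p, P v p) := fun v => Classical.propDecidable _
  let F : Fin n → Fin n × Fin n := fun v => if h : ∃ p, P v p then h.choose
    else ((⟨0, hn⟩ : Fin n), (⟨0, hn⟩ : Fin n))
  have hFP : ∀ v ∈ univ \ T₂, P v (F v) := by
    intro v hv
    have h := claim v hv
    simp only [F, dif_pos h]
    exact h.choose_spec
  refine Finset.card_le_card_of_injOn F (fun v hv => (hFP v hv).1) ?_
  intro v hv v' hv' he
  exact hPmid v (F v) (hFP v hv) v' (he ▸ hFP v' hv')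

lemma forward₂ (n : ℕ) (hn : 0 < n) (T₁ T₂ : Finset (Fin n))
    (hT : (completeBipartiteGraph (Fin n) (Fin n)).IsStrongGeodeticSet
      ((T₁.image Sum.inl ∪ T₂.image Sum.inr : Finset (Fin n ⊕ Fin n)) : Set (Fin n ⊕ Fin n))) :
    (univ \ T₁).card ≤ T₂.offDiag.card := by
  classical
  have : Nonempty (Fin n) := ⟨⟨0, hn⟩⟩
  obtain ⟨g, hlen, hcov⟩ := hT
  let P : Fin n → Fin n × Fin n → Prop := fun v p => p ∈ T₂.offDiag ∧
    ∀ (h1 : (inr p.1 : Fin n ⊕ Fin n) ∈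
        ((T₁.image Sum.inl ∪ T₂.image Sum.inr : Finset (Fin n ⊕ Fin n)) : Set (Fin n ⊕ Fin n)))
      (h2 : (inr p.2 : Fin n ⊕ Fin n) ∈
        ((T₁.image Sum.inl ∪ T₂.image Sum.inr : Finset (Fin n ⊕ Fin n)) : Set (Fin n ⊕ Fin n))),
      (inl v : Fin n ⊕ Fin n) ∈ (g (inr p.1) h1 (inr p.2) h2).support
  have claim : ∀ v ∈ univ \ T₁, ∃ p, P v p := by
    intro v hv
    have hv2 : v ∉ T₁ := by simpa using hv
    obtain ⟨x, hx, y, hy, hm⟩ := hcov (inl v)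
    have hl := hlen x hx y hy
    rcases x with a | a <;> rcases y with b | b
    · by_cases hab : a = b
      · subst hab
        rw [SimpleGraph.dist_self] at hl
        rw [walk_support_of_length_zero _ hl] at hm
        simp at hm
        exact absurd (hm ▸ mem_S_inl.mp hx) hv2
      · rw [cbg_dist_ll hab] at hl
        obtain ⟨m, hadj1, hadj2, hsup⟩ := walk_support_of_length_two _ hl
        rw [hsup] at hm
        rcases m with c | c
        · simp at hadj1
        · simp at hm
          rcases hm with h | h
          · exact absurd (h ▸ mem_S_inl.mp hx) hv2
          · exact absurd (h ▸ mem_S_inl.mp hy) hv2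
    · rw [cbg_dist_lr] at hl
      rw [walk_support_of_length_one _ hl] at hm
      simp at hm
      exact absurd (hm ▸ mem_S_inl.mp hx) hv2
    · rw [cbg_dist_rl] at hl
      rw [walk_support_of_length_one _ hl] at hm
      simp at hm
      exact absurd (hm ▸ mem_S_inl.mp hy) hv2
    · by_cases hab : a = b
      · subst hab
        rw [SimpleGraph.dist_self] at hl
        rw [walk_support_of_length_zero _ hl] at hm
        simp at hm
      · rw [cbg_dist_rr hab] at hl
        refine ⟨(a, b), Finset.mem_offDiag.mpr ⟨mem_S_inr.mp hx, mem_S_inr.mp hy, hab⟩, ?_⟩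
        intro h1 h2; exact hm
  have hPmid : ∀ v p, P v p → ∀ v', P v' p → v = v' := by
    intro v p hp v' hp'
    obtain ⟨hpd, hsup⟩ := hp
    obtain ⟨-, hsup'⟩ := hp'
    obtain ⟨ha, hb, hab⟩ := Finset.mem_offDiag.mp hpd
    have h1 : (inr p.1 : Fin n ⊕ Fin n) ∈
        ((T₁.image Sum.inl ∪ T₂.image Sum.inr : Finset (Fin n ⊕ Fin n)) :
          Set (Fin n ⊕ Fin n)) := mem_S_inr.mpr ha
    have h2 : (inr p.2 : Fin n ⊕ Fin n) ∈
        ((T₁.image Sum.inl ∪ T₂.image Sum.inr : Finset (Fin n ⊕ Fin n)) :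
          Set (Fin n ⊕ Fin n)) := mem_S_inr.mpr hb
    have hl := hlen (inr p.1) h1 (inr p.2) h2
    rw [cbg_dist_rr hab] at hl
    obtain ⟨m, hadj1, hadj2, hsupeq⟩ := walk_support_of_length_two _ hl
    have e1 := hsup h1 h2
    have e2 := hsup' h1 h2
    rw [hsupeq] at e1 e2
    rcases m with c | c
    · simp at e1 e2
      exact e1.trans e2.symm
    · simp at hadj1
  haveI : ∀ v, Decidable (∃ p, P v p) := fun v => Classical.propDecidable _
  let F : Fin n → Fin n × Fin n := fun v => if h : ∃ p, P v p then h.choose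
    else ((⟨0, hn⟩ : Fin n), (⟨0, hn⟩ : Fin n))
  have hFP : ∀ v ∈ univ \ T₁, P v (F v) := by
    intro v hv
    have h := claim v hv
    simp only [F, dif_pos h]
    exact h.choose_spec
  refine Finset.card_le_card_of_injOn F (fun v hv => (hFP v hv).1) ?_
  intro v hv v' hv' he
  exact hPmid v (F v) (hFP v hv) v' (he ▸ hFP v' hv')

def bwWalk (n : ℕ) (m₁ m₂ : Fin n → Fin n → Fin n) :
    (x y : Fin n ⊕ Fin n) → (completeBipartiteGraph (Fin n) (Fin n)).Walk x y
  | inl a, inl b =>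
      if h : a = b then by subst h; exact Walk.nil
      else Walk.cons (cbg_adj_lr a (m₁ a b)) (Walk.cons (cbg_adj_rl b (m₁ a b)) Walk.nil)
  | inl a, inr b => Walk.cons (cbg_adj_lr a b) Walk.nil
  | inr a, inl b => Walk.cons (cbg_adj_rl b a) Walk.nil
  | inr a, inr b =>
      if h : a = b then by subst h; exact Walk.nil
      else Walk.cons (cbg_adj_rl (m₂ a b) a) (Walk.cons (cbg_adj_lr (m₂ a b) b) Walk.nil)

lemma bwWalk_support_ll_ne (n : ℕ) (m₁ m₂ : Fin n → Fin n → Fin n) {a b : Fin n} (h : a ≠ b) :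
    (bwWalk n m₁ m₂ (inl a) (inl b)).support = [inl a, inr (m₁ a b), inl b] := by
  simp [bwWalk, h]

lemma bwWalk_support_rr_ne (n : ℕ) (m₁ m₂ : Fin n → Fin n → Fin n) {a b : Fin n} (h : a ≠ b) :
    (bwWalk n m₁ m₂ (inr a) (inr b)).support = [inr a, inl (m₂ a b), inr b] := by
  simp [bwWalk, h]

lemma bwWalk_support_ll_eq (n : ℕ) (m₁ m₂ : Fin n → Fin n → Fin n) (a : Fin n) :
    (bwWalk n m₁ m₂ (inl a) (inl a)).support = [inl a] := by
  simp [bwWalk]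

lemma bwWalk_support_rr_eq (n : ℕ) (m₁ m₂ : Fin n → Fin n → Fin n) (a : Fin n) :
    (bwWalk n m₁ m₂ (inr a) (inr a)).support = [inr a] := by
  simp [bwWalk]

lemma bwWalk_length (n : ℕ) (hn : 0 < n) (m₁ m₂ : Fin n → Fin n → Fin n) (x y : Fin n ⊕ Fin n) :
    (bwWalk n m₁ m₂ x y).length = (completeBipartiteGraph (Fin n) (Fin n)).dist x y := by
  have : Nonempty (Fin n) := ⟨⟨0, hn⟩⟩
  rcases x with a | a <;> rcases y with b | b
  · by_cases h : a = b
    · subst h; rw [SimpleGraph.dist_self]; simp [bwWalk]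
    · rw [cbg_dist_ll h]; simp [bwWalk, h]
  · rw [cbg_dist_lr]; simp [bwWalk]
  · rw [cbg_dist_rl]; simp [bwWalk]
  · by_cases h : a = b
    · subst h; rw [SimpleGraph.dist_self]; simp [bwWalk]
    · rw [cbg_dist_rr h]; simp [bwWalk, h]

lemma backward (n : ℕ) (hn : 0 < n) (T₁ T₂ : Finset (Fin n))
    (h1 : (univ \ T₂).card ≤ T₁.offDiag.card) (h2 : (univ \ T₁).card ≤ T₂.offDiag.card) :
    (completeBipartiteGraph (Fin n) (Fin n)).IsStrongGeodeticSet
      ((T₁.image Sum.inl ∪ T₂.image Sum.inr : Finset (Fin n ⊕ Fin n)) : Set (Fin n ⊕ Fin n)) := by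
  classical
  obtain ⟨f₁⟩ : Nonempty ((univ \ T₂ : Finset (Fin n)) ↪ (T₁.offDiag : Finset (Fin n × Fin n))) :=
    Function.Embedding.nonempty_of_card_le (by rw [Fintype.card_coe, Fintype.card_coe]; exact h1)
  obtain ⟨f₂⟩ : Nonempty ((univ \ T₁ : Finset (Fin n)) ↪ (T₂.offDiag : Finset (Fin n × Fin n))) :=
    Function.Embedding.nonempty_of_card_le (by rw [Fintype.card_coe, Fintype.card_coe]; exact h2)
  let m₁ : Fin n → Fin n → Fin n := fun a b =>
    @dite _ (∃ v : (univ \ T₂ : Finset (Fin n)), ((f₁ v : Fin n × Fin n)) = (a, b))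
      (Classical.propDecidable _) (fun h => (h.choose : Fin n)) (fun _ => ⟨0, hn⟩)
  let m₂ : Fin n → Fin n → Fin n := fun a b =>
    @dite _ (∃ v : (univ \ T₁ : Finset (Fin n)), ((f₂ v : Fin n × Fin n)) = (a, b))
      (Classical.propDecidable _) (fun h => (h.choose : Fin n)) (fun _ => ⟨0, hn⟩)
  refine ⟨fun x _ y _ => bwWalk n m₁ m₂ x y, fun x _ y _ => bwWalk_length n hn m₁ m₂ x y, ?_⟩
  intro v
  rcases v with c | c
  · by_cases hc : c ∈ T₁
    · exact ⟨inl c, mem_S_inl.mpr hc, inl c, mem_S_inl.mpr hc, by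
        rw [bwWalk_support_ll_eq]; simp⟩
    · set u : (univ \ T₁ : Finset (Fin n)) := ⟨c, by simp [hc]⟩ with hu
      obtain ⟨ha, hb, hab⟩ := Finset.mem_offDiag.mp (f₂ u).2
      have hex : ∃ v : (univ \ T₁ : Finset (Fin n)),
          ((f₂ v : Fin n × Fin n)) = ((f₂ u : Fin n × Fin n).1, (f₂ u : Fin n × Fin n).2) :=
        ⟨u, rfl⟩
      have hm : m₂ (f₂ u : Fin n × Fin n).1 (f₂ u : Fin n × Fin n).2 = c := by
        simp only [m₂, dif_pos hex]
        have := hex.choose_spec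
        have heq : f₂ hex.choose = f₂ u := Subtype.ext this
        have : hex.choose = u := f₂.injective heq
        rw [this]
      refine ⟨inr (f₂ u : Fin n × Fin n).1, mem_S_inr.mpr ha,
        inr (f₂ u : Fin n × Fin n).2, mem_S_inr.mpr hb, ?_⟩
      rw [bwWalk_support_rr_ne n m₁ m₂ hab, hm]
      simp
  · by_cases hc : c ∈ T₂
    · exact ⟨inr c, mem_S_inr.mpr hc, inr c, mem_S_inr.mpr hc, by
        rw [bwWalk_support_rr_eq]; simp⟩
    · set u : (univ \ T₂ : Finset (Fin n)) := ⟨c, by simp [hc]⟩ with hu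
      obtain ⟨ha, hb, hab⟩ := Finset.mem_offDiag.mp (f₁ u).2
      have hex : ∃ v : (univ \ T₂ : Finset (Fin n)),
          ((f₁ v : Fin n × Fin n)) = ((f₁ u : Fin n × Fin n).1, (f₁ u : Fin n × Fin n).2) :=
        ⟨u, rfl⟩
      have hm : m₁ (f₁ u : Fin n × Fin n).1 (f₁ u : Fin n × Fin n).2 = c := by
        simp only [m₁, dif_pos hex]
        have := hex.choose_spec
        have heq : f₁ hex.choose = f₁ u := Subtype.ext this
        have : hex.choose = u := f₁.injective heq
        rw [this]
      refine ⟨inl (f₁ u : Fin n × Fin n).1, mem_S_inl.mpr ha,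
        inl (f₁ u : Fin n × Fin n).2, mem_S_inl.mpr hb, ?_⟩
      rw [bwWalk_support_ll_ne n m₁ m₂ hab, hm]
      simp

lemma nat_le_mul_self (c : ℕ) : c ≤ c * c := by
  rcases Nat.eq_zero_or_pos c with h0 | h0
  · subst h0; simp
  · calc c = c * 1 := by ring
      _ ≤ c * c := Nat.mul_le_mul_left c h0

lemma nat_of_int (a b c : ℕ) (h : (a : ℤ) - b ≤ (c : ℤ) * c - c) : a - b ≤ c * c - c := by
  have hcc : c ≤ c * c := nat_le_mul_self c
  rcases le_or_gt b a with hba | hba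
  · zify [hba, hcc]
    exact h
  · simp [Nat.sub_eq_zero_of_le hba.le]

lemma key (n t₁ t₂ : ℕ) (hn : 6 ≤ n) (h₁n : t₁ ≤ n) (h₂n : t₂ ≤ n)
    (h1 : n - t₂ ≤ t₁ * t₁ - t₁) (h2 : n - t₁ ≤ t₂ * t₂ - t₂) (ht : t₂ + 2 ≤ t₁) :
    ∃ s₁ s₂ : ℕ, s₁ ≤ n ∧ s₂ ≤ n ∧ s₁ + s₂ = t₁ + t₂ ∧
      n - s₂ ≤ s₁ * s₁ - s₁ ∧ n - s₁ ≤ s₂ * s₂ - s₂ ∧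
      |(s₁ : ℤ) - s₂| < |(t₁ : ℤ) - t₂| := by
  have htt₁ : t₁ ≤ t₁ * t₁ := nat_le_mul_self t₁
  have htt₂ : t₂ ≤ t₂ * t₂ := nat_le_mul_self t₂
  have h1' : (n : ℤ) - t₂ ≤ (t₁ : ℤ) * t₁ - t₁ := by zify [h₂n, htt₁] at h1; exact h1
  have h2' : (n : ℤ) - t₁ ≤ (t₂ : ℤ) * t₂ - t₂ := by zify [h₁n, htt₂] at h2; exact h2
  rcases Nat.eq_zero_or_pos t₂ with h0 | h0
  · -- t₂ = 0, so t₁ = n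
    subst h0
    have ht₁ : t₁ = n := by simp at h2; omega
    refine ⟨n - 2, 2, by omega, by omega, by omega, ?_, ?_, ?_⟩
    · apply nat_of_int
      have e0 : ((n - 2 : ℕ) : ℤ) = (n : ℤ) - 2 := by omega
      rw [e0]
      push_cast
      nlinarith [show (6 : ℤ) ≤ (n : ℤ) by exact_mod_cast hn]
    · omega
    · have e1 : ((n - 2 : ℕ) : ℤ) = (n : ℤ) - 2 := by omega
      rw [e1]
      rcases abs_cases ((n : ℤ) - 2 - ((2 : ℕ) : ℤ)) with ⟨e, _⟩ | ⟨e, _⟩ <;>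
        rcases abs_cases ((t₁ : ℤ) - ((0 : ℕ) : ℤ)) with ⟨e', _⟩ | ⟨e', _⟩ <;>
        rw [e, e'] <;> omega
  · -- t₂ ≥ 1
    refine ⟨t₁ - 1, t₂ + 1, by omega, by omega, by omega, ?_, ?_, ?_⟩
    · apply nat_of_int
      have e1 : ((t₁ - 1 : ℕ) : ℤ) = (t₁ : ℤ) - 1 := by omega
      rw [e1]
      have hA : (0 : ℤ) ≤ (t₁ : ℤ) - t₂ - 1 := by
        have : (t₂ : ℤ) + 2 ≤ t₁ := by exact_mod_cast ht
        omega
      have hB : (0 : ℤ) ≤ (t₁ : ℤ) + t₂ - 3 := by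
        have : (t₂ : ℤ) + 2 ≤ t₁ := by exact_mod_cast ht
        have : (1 : ℤ) ≤ t₂ := by exact_mod_cast h0
        omega
      push_cast
      nlinarith [mul_nonneg hA hB]
    · apply nat_of_int
      have e1 : ((t₁ - 1 : ℕ) : ℤ) = (t₁ : ℤ) - 1 := by omega
      rw [e1]
      have ht2 : (1 : ℤ) ≤ t₂ := by exact_mod_cast h0
      push_cast
      nlinarith [h2', ht2]
    · have e1 : ((t₁ - 1 : ℕ) : ℤ) = (t₁ : ℤ) - 1 := by omega
      have e2 : ((t₂ + 1 : ℕ) : ℤ) = (t₂ : ℤ) + 1 := by omega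
      rw [e1, e2]
      have hc : (t₂ : ℤ) + 2 ≤ t₁ := by exact_mod_cast ht
      rcases abs_cases ((t₁ : ℤ) - 1 - ((t₂ : ℤ) + 1)) with ⟨e, _⟩ | ⟨e, _⟩ <;>
        rcases abs_cases ((t₁ : ℤ) - (t₂ : ℤ)) with ⟨e', _⟩ | ⟨e', _⟩ <;>
        rw [e, e'] <;> omega

/-- Balancing lemma for strong geodetic sets of `K_{n,n}`, `n ≥ 6`: from a strong geodetic
set `T = T₁ ∪ T₂` with `||T₁| - |T₂|| ≥ 2` one can obtain a strong geodetic set `T' = T₁' ∪ T₂'`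
of the same size whose parts are strictly more balanced. -/
theorem balanced_strong_geodetic_set (n : ℕ) (hn : 6 ≤ n) (T₁ T₂ : Finset (Fin n))
    (hT : (completeBipartiteGraph (Fin n) (Fin n)).IsStrongGeodeticSet
      ((T₁.image Sum.inl ∪ T₂.image Sum.inr : Finset (Fin n ⊕ Fin n)) : Set (Fin n ⊕ Fin n)))
    (hdiff : 2 ≤ |(T₁.card : ℤ) - (T₂.card : ℤ)|) :
    ∃ T₁' T₂' : Finset (Fin n),
      (completeBipartiteGraph (Fin n) (Fin n)).IsStrongGeodeticSet
        ((T₁'.image Sum.inl ∪ T₂'.image Sum.inr : Finset (Fin n ⊕ Fin n)) :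
          Set (Fin n ⊕ Fin n)) ∧
      (T₁'.image Sum.inl ∪ T₂'.image Sum.inr : Finset (Fin n ⊕ Fin n)).card =
        (T₁.image Sum.inl ∪ T₂.image Sum.inr : Finset (Fin n ⊕ Fin n)).card ∧
      |(T₁'.card : ℤ) - (T₂'.card : ℤ)| < |(T₁.card : ℤ) - (T₂.card : ℤ)| := by
  have hn0 : 0 < n := by omega
  have h1 := forward₁ n hn0 T₁ T₂ hT
  have h2 := forward₂ n hn0 T₁ T₂ hT
  rw [Finset.card_sdiff_of_subset (Finset.subset_univ _), Finset.card_univ, Fintype.card_fin,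
    Finset.offDiag_card] at h1 h2
  have h₁n : T₁.card ≤ n := by
    simpa using Finset.card_le_univ T₁
  have h₂n : T₂.card ≤ n := by
    simpa using Finset.card_le_univ T₂
  have hcard : ∀ A B : Finset (Fin n),
      (A.image Sum.inl ∪ B.image Sum.inr : Finset (Fin n ⊕ Fin n)).card = A.card + B.card := by
    intro A B
    rw [Finset.card_union_of_disjoint (by simp [Finset.disjoint_left]),
      Finset.card_image_of_injective _ Sum.inl_injective,
      Finset.card_image_of_injective _ Sum.inr_injective]
  have hcases : T₂.card + 2 ≤ T₁.card ∨ T₁.card + 2 ≤ T₂.card := by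
    rcases abs_cases ((T₁.card : ℤ) - T₂.card) with ⟨e, _⟩ | ⟨e, _⟩ <;> rw [e] at hdiff <;> omega
  rcases hcases with hc | hc
  · obtain ⟨s₁, s₂, hs₁n, hs₂n, hsum, k1, k2, kabs⟩ :=
      key n T₁.card T₂.card hn h₁n h₂n h1 h2 hc
    obtain ⟨T₁', -, hT₁'⟩ := Finset.exists_subset_card_eq
      (show s₁ ≤ (univ : Finset (Fin n)).card by simpa using hs₁n)
    obtain ⟨T₂', -, hT₂'⟩ := Finset.exists_subset_card_eq
      (show s₂ ≤ (univ : Finset (Fin n)).card by simpa using hs₂n)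
    refine ⟨T₁', T₂', backward n hn0 T₁' T₂' ?_ ?_, ?_, ?_⟩
    · rw [Finset.card_sdiff_of_subset (Finset.subset_univ _), Finset.card_univ, Fintype.card_fin,
        Finset.offDiag_card, hT₁', hT₂']
      exact k1
    · rw [Finset.card_sdiff_of_subset (Finset.subset_univ _), Finset.card_univ, Fintype.card_fin,
        Finset.offDiag_card, hT₁', hT₂']
      exact k2
    · rw [hcard, hcard, hT₁', hT₂', hsum]
    · rw [hT₁', hT₂']
      exact kabs
  · obtain ⟨s₁, s₂, hs₁n, hs₂n, hsum, k1, k2, kabs⟩ :=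
      key n T₂.card T₁.card hn h₂n h₁n h2 h1 hc
    obtain ⟨T₁', -, hT₁'⟩ := Finset.exists_subset_card_eq
      (show s₂ ≤ (univ : Finset (Fin n)).card by simpa using hs₂n)
    obtain ⟨T₂', -, hT₂'⟩ := Finset.exists_subset_card_eq
      (show s₁ ≤ (univ : Finset (Fin n)).card by simpa using hs₁n)
    refine ⟨T₁', T₂', backward n hn0 T₁' T₂' ?_ ?_, ?_, ?_⟩
    · rw [Finset.card_sdiff_of_subset (Finset.subset_univ _), Finset.card_univ, Fintype.card_fin,
        Finset.offDiag_card, hT₁', hT₂']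
      exact k2
    · rw [Finset.card_sdiff_of_subset (Finset.subset_univ _), Finset.card_univ, Fintype.card_fin,
        Finset.offDiag_card, hT₁', hT₂']
      exact k1
    · rw [hcard, hcard, hT₁', hT₂']
      omega
    · rw [hT₁', hT₂', abs_sub_comm]
      calc |(s₁ : ℤ) - s₂| < |(T₂.card : ℤ) - T₁.card| := kabs
        _ = |(T₁.card : ℤ) - T₂.card| := abs_sub_comm _ _
end

section
/- If G is a connected simple graph on at least 2 vertices, then sg(G) ≤ n(G) − diam(G) + 1, where n(G) is the number of vertices and diam(G) is the diameter of G. -/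
open SimpleGraph

/-- If `G` is a connected simple graph on at least two vertices, then
`sg(G) ≤ n(G) - diam(G) + 1`. -/
theorem sg_le_card_sub_diam {V : Type*} [Fintype V] (G : SimpleGraph V)
    (hconn : G.Connected) (hn : 2 ≤ Fintype.card V) :
    G.strongGeodeticNumber ≤ Fintype.card V - G.diam + 1 := by
  classical
  have hne : Nonempty V := Fintype.card_pos_iff.mp (by omega)
  -- the extended diameter is finite
  have hediam : G.ediam ≠ ⊤ := by
    obtain ⟨a, b, hab⟩ := G.exists_edist_eq_ediam_of_finite
    rw [← hab]
    exact edist_ne_top_iff_reachable.mpr (hconn a b)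
  -- the diameter is positive
  have hdiampos : 1 ≤ G.diam := by
    obtain ⟨a, b, hab⟩ := (Fintype.one_lt_card_iff (α := V)).mp (by omega)
    calc 1 ≤ G.dist a b := hconn.pos_dist_of_ne hab
    _ ≤ G.diam := G.dist_le_diam hediam
  -- a diametral pair
  obtain ⟨u, v, huv⟩ := G.exists_dist_eq_diam
  have huvne : u ≠ v := by
    rintro rfl
    rw [SimpleGraph.dist_self] at huv
    omega
  -- a geodesic path between them
  obtain ⟨P0, hP0⟩ := (hconn u v).exists_walk_length_eq_dist
  set P : G.Walk u v := P0.bypass with hPdef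
  have hPpath : P.IsPath := P0.bypass_isPath
  have hPlen : P.length = G.dist u v := by
    refine le_antisymm ?_ (SimpleGraph.dist_le P)
    rw [← hP0]
    exact P0.length_bypass_le
  -- the strong geodetic set
  set S : Finset V := Finset.univ \ (P.support.toFinset \ {u, v}) with hSdef
  have huS : u ∈ S := by simp [hSdef]
  have hvS : v ∈ S := by simp [hSdef]
  -- choose geodesics
  let g : ∀ x ∈ (S : Set V), ∀ y ∈ (S : Set V), G.Walk x y := fun x _ y _ =>
    if h : x = u ∧ y = v then P.copy h.1.symm h.2.symm
    else ((hconn x y).exists_walk_length_eq_dist).choose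
  have hsgs : G.IsStrongGeodeticSet (S : Set V) := by
    refine ⟨g, fun x hx y hy => ?_, fun w => ?_⟩
    · by_cases h : x = u ∧ y = v
      · simp only [g, dif_pos h, SimpleGraph.Walk.length_copy]
        rw [h.1, h.2]
        exact hPlen
      · simp only [g, dif_neg h]
        exact ((hconn x y).exists_walk_length_eq_dist).choose_spec
    · by_cases hw : w ∈ P.support
      · refine ⟨u, huS, v, hvS, ?_⟩
        simpa only [g, dif_pos (show u = u ∧ v = v from ⟨rfl, rfl⟩), SimpleGraph.Walk.support_copy] using hw
      · have hwS : w ∈ S := by simp [hSdef, hw]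
        exact ⟨w, hwS, w, hwS, SimpleGraph.Walk.start_mem_support _⟩
  -- cardinality computation
  have hsub : ({u, v} : Finset V) ⊆ P.support.toFinset := by
    intro a ha
    simp only [Finset.mem_insert, Finset.mem_singleton] at ha
    rcases ha with rfl | rfl
    · simpa using P.start_mem_support
    · simpa using P.end_mem_support
  have hcard1 : P.support.toFinset.card = G.diam + 1 := by
    rw [List.toFinset_card_of_nodup hPpath.support_nodup, SimpleGraph.Walk.length_support,
      hPlen, huv]
  have hcard2 : (P.support.toFinset \ {u, v}).card = G.diam + 1 - 2 := by
    rw [Finset.card_sdiff_of_subset hsub, hcard1, Finset.card_insert_of_notMem (by simpa using huvne),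
      Finset.card_singleton]
  have hScard : S.card = Fintype.card V - (G.diam + 1 - 2) := by
    rw [hSdef, Finset.card_sdiff_of_subset (Finset.subset_univ _), hcard2, Finset.card_univ]
  have hmem : S.card ∈ {n | ∃ T : Finset V, G.IsStrongGeodeticSet ↑T ∧ T.card = n} :=
    ⟨S, hsgs, rfl⟩
  calc G.strongGeodeticNumber ≤ S.card := Nat.sInf_le hmem
    _ ≤ Fintype.card V - G.diam + 1 := by
        rw [hScard]; omega
end

section
/- The strong geodetic number of the Petersen graph is 4. -/
open SimpleGraph

/-- The Petersen graph, realized as the Kneser graph `K(5,2)`: vertices are the 2-element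
subsets of a 5-element set, adjacent iff disjoint. -/
def petersenGraph : SimpleGraph {s : Finset (Fin 5) // s.card = 2} where
  Adj a b := Disjoint a.val b.val
  symm := ⟨fun a b h => h.symm⟩
  loopless := by
    constructor
    intro a h
    have h0 : a.val = ∅ := disjoint_self.mp h
    have h2 := a.2
    rw [h0] at h2
    simp at h2

abbrev PV := {s : Finset (Fin 5) // s.card = 2}

lemma card_PV : Fintype.card PV = 10 := by decide

lemma mid_card : ∀ s t : Finset (Fin 5), s.card = 2 → t.card = 2 → s ≠ t →
    ¬ Disjoint s t → (s ∪ t)ᶜ.card = 2 := by decide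

/-- The unique common neighbor of two distinct non-adjacent vertices of the Petersen graph. -/
def pmid (x y : PV) (hne : x ≠ y) (hnd : ¬ Disjoint x.1 y.1) : PV :=
  ⟨(x.1 ∪ y.1)ᶜ, mid_card x.1 y.1 x.2 y.2 (fun h => hne (Subtype.ext h)) hnd⟩

lemma adj_pmid_left (x y : PV) (hne : x ≠ y) (hnd : ¬ Disjoint x.1 y.1) :
    petersenGraph.Adj x (pmid x y hne hnd) := by
  show Disjoint x.1 (x.1 ∪ y.1)ᶜ
  exact disjoint_compl_right.mono_left Finset.subset_union_left

lemma adj_pmid_right (x y : PV) (hne : x ≠ y) (hnd : ¬ Disjoint x.1 y.1) :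
    petersenGraph.Adj (pmid x y hne hnd) y := by
  show Disjoint (x.1 ∪ y.1)ᶜ y.1
  exact disjoint_compl_left.mono_right Finset.subset_union_right

instance : DecidableRel petersenGraph.Adj :=
  fun a b => inferInstanceAs (Decidable (Disjoint a.1 b.1))

/-- A canonical geodesic between any two vertices of the Petersen graph. -/
def totalg (x y : PV) : petersenGraph.Walk x y :=
  if h : x = y then h ▸ Walk.nil
  else if ha : petersenGraph.Adj x y then Walk.cons ha Walk.nil
  else Walk.cons (adj_pmid_left x y h ha) (Walk.cons (adj_pmid_right x y h ha) Walk.nil)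

lemma totalg_length_le (x y : PV) : (totalg x y).length ≤ 2 := by
  unfold totalg
  split
  · subst ‹x = y›; simp
  · split <;> simp

lemma totalg_length_eq_dist (x y : PV) :
    (totalg x y).length = petersenGraph.dist x y := by
  unfold totalg
  split
  · subst ‹x = y›; simp [SimpleGraph.dist_self]
  · rename_i hne
    split
    · rename_i ha
      simp [(SimpleGraph.dist_eq_one_iff_adj).mpr ha]
    · rename_i ha
      have hle : petersenGraph.dist x y ≤ 2 := by
        have := SimpleGraph.dist_le (Walk.cons (adj_pmid_left x y hne ha)
          (Walk.cons (adj_pmid_right x y hne ha) Walk.nil))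
        simpa using this
      have hr : petersenGraph.Reachable x y :=
        ⟨Walk.cons (adj_pmid_left x y hne ha) (Walk.cons (adj_pmid_right x y hne ha) Walk.nil)⟩
      have h0 : petersenGraph.dist x y ≠ 0 := fun h => hne (hr.dist_eq_zero_iff.mp h)
      have h1 : petersenGraph.dist x y ≠ 1 := fun h => ha (SimpleGraph.dist_eq_one_iff_adj.mp h)
      simp only [Walk.length_cons, Walk.length_nil]
      omega

lemma petersen_dist_le (x y : PV) : petersenGraph.dist x y ≤ 2 := by
  rw [← totalg_length_eq_dist]; exact totalg_length_le x y

def S4 : Finset PV :=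
  {⟨{0,1}, by decide⟩, ⟨{0,2}, by decide⟩, ⟨{0,3}, by decide⟩, ⟨{0,4}, by decide⟩}

lemma S4_card : S4.card = 4 := by decide

lemma S4_cover : ∀ v : PV, ∃ x ∈ S4, ∃ y ∈ S4, v ∈ (totalg x y).support := by decide

lemma S4_sgs : petersenGraph.IsStrongGeodeticSet ↑S4 := by
  refine ⟨fun x _ y _ => totalg x y, fun x _ y _ => totalg_length_eq_dist x y, ?_⟩
  intro v
  obtain ⟨x, hx, y, hy, h⟩ := S4_cover v
  exact ⟨x, Finset.mem_coe.mpr hx, y, Finset.mem_coe.mpr hy, h⟩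

lemma sgs_lower (S : Finset PV) (hS : petersenGraph.IsStrongGeodeticSet ↑S) :
    4 ≤ S.card := by
  classical
  obtain ⟨g, hlen, hcov⟩ := hS
  set m : PV × PV → PV := fun p =>
    if h : p.1 ∈ (↑S : Set PV) ∧ p.2 ∈ (↑S : Set PV) then (g p.1 h.1 p.2 h.2).getVert 1
    else p.1 with hm
  have hsub : (Finset.univ : Finset PV) ⊆ S ∪ S.offDiag.image m := by
    intro v _
    by_cases hv : v ∈ S
    · exact Finset.mem_union_left _ hv
    obtain ⟨x, hx, y, hy, hmem⟩ := hcov v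
    have hxS : x ∈ S := Finset.mem_coe.mp hx
    have hyS : y ∈ S := Finset.mem_coe.mp hy
    have hvx : v ≠ x := fun h => hv (h ▸ hxS)
    have hvy : v ≠ y := fun h => hv (h ▸ hyS)
    have hwlen : (g x hx y hy).length ≤ 2 := by
      rw [hlen x hx y hy]; exact petersen_dist_le x y
    obtain ⟨n, hn, hnle⟩ := Walk.mem_support_iff_exists_getVert.mp hmem
    have hn0 : n ≠ 0 := by
      intro h; subst h
      rw [Walk.getVert_zero] at hn; exact hvx hn.symm
    have hnl : n ≠ (g x hx y hy).length := by
      intro h; rw [h, Walk.getVert_length] at hn; exact hvy hn.symm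
    have hn1 : n = 1 := by omega
    have hl2 : (g x hx y hy).length = 2 := by omega
    have hxy : x ≠ y := by
      intro h
      subst h
      have : petersenGraph.dist x x = 0 := SimpleGraph.dist_self
      rw [hlen x hx x hy, this] at hl2
      exact two_ne_zero hl2.symm
    refine Finset.mem_union_right _ (Finset.mem_image.mpr ⟨(x, y), ?_, ?_⟩)
    · exact Finset.mem_offDiag.mpr ⟨hxS, hyS, hxy⟩
    · show m (x, y) = v
      rw [hm]
      simp only
      rw [dif_pos ⟨hx, hy⟩]
      rw [hn1] at hn
      exact hn
  have h1 : (Finset.univ : Finset PV).card ≤ (S ∪ S.offDiag.image m).card :=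
    Finset.card_le_card hsub
  have h2 : (S ∪ S.offDiag.image m).card ≤ S.card + (S.offDiag.image m).card :=
    Finset.card_union_le _ _
  have h3 : (S.offDiag.image m).card ≤ S.offDiag.card := Finset.card_image_le
  have h4 : S.offDiag.card = S.card * S.card - S.card := Finset.offDiag_card S
  have h5 : (Finset.univ : Finset PV).card = 10 := by
    rw [Finset.card_univ]; exact card_PV
  by_contra hlt
  push_neg at hlt
  have hlt' : S.card ≤ 3 := by omega
  have h6 : S.card * S.card ≤ 3 * S.card := Nat.mul_le_mul_right S.card hlt'
  omega

/-- The strong geodetic number of the Petersen graph is `4`. -/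
theorem sg_petersen : petersenGraph.strongGeodeticNumber = 4 := by
  have h4 : petersenGraph.IsStrongGeodeticSet ↑S4 ∧ S4.card = 4 := ⟨S4_sgs, S4_card⟩
  unfold SimpleGraph.strongGeodeticNumber
  set N : Set ℕ := {n | ∃ S : Finset PV, petersenGraph.IsStrongGeodeticSet ↑S ∧ S.card = n}
    with hN
  have hmem4 : 4 ∈ N := ⟨S4, h4⟩
  refine le_antisymm (Nat.sInf_le hmem4) ?_
  obtain ⟨S, hS, hc⟩ := Nat.sInf_mem (Set.nonempty_of_mem hmem4)
  rw [← hc]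
  exact sgs_lower S hS
end

section
/- For every integer k ≥ 2 there exists a finite connected simple graph G with diam(G) = 2, sg(G) = k, and n(G) = k + C(k,2) vertices (so that equality is attained in the bound n(G) ≤ sg(G) + C(sg(G),2)·(diam(G) − 1)). One such graph G_k is obtained from the subdivision of the complete graph K_k — with vertex set V(K_k) ∪ E(K_k), each subdivision vertex e ∈ E(K_k) adjacent to its two endpoints in V(K_k) — by additionally joining every pair of distinct subdivision vertices e, f ∈ E(K_k) by an edge. -/
open SimpleGraph

/-- The graph `G_k`: the subdivision of `K_k` (each edge of `K_k` replaced by a subdivision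
vertex adjacent to its two endpoints) with every pair of distinct subdivision vertices
additionally joined by an edge. -/
def subdividedCompleteGraph (k : ℕ) :
    SimpleGraph (Fin k ⊕ {e : Sym2 (Fin k) // ¬e.IsDiag}) where
  Adj x y :=
    match x, y with
    | Sum.inl _, Sum.inl _ => False
    | Sum.inl u, Sum.inr e => u ∈ e.val
    | Sum.inr e, Sum.inl u => u ∈ e.val
    | Sum.inr e, Sum.inr f => e ≠ f
  symm := ⟨by rintro (u | e) (v | f) h <;> simp_all <;> exact Ne.symm h⟩
  loopless := ⟨by rintro (u | e) h <;> simp_all⟩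

namespace SDCGaux

variable {k : ℕ}

lemma adj_ll (u v : Fin k) : ¬ (subdividedCompleteGraph k).Adj (Sum.inl u) (Sum.inl v) := id

lemma adj_lr {u : Fin k} {e} :
    (subdividedCompleteGraph k).Adj (Sum.inl u) (Sum.inr e) ↔ u ∈ e.val := Iff.rfl

lemma adj_rl {u : Fin k} {e} :
    (subdividedCompleteGraph k).Adj (Sum.inr e) (Sum.inl u) ↔ u ∈ e.val := Iff.rfl

lemma adj_rr {e f : {e : Sym2 (Fin k) // ¬e.IsDiag}} :
    (subdividedCompleteGraph k).Adj (Sum.inr e) (Sum.inr f) ↔ e ≠ f := Iff.rfl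

/-- The subdivision vertex corresponding to the pair `{u, v}`. -/
def ev (u v : Fin k) (h : u ≠ v) : {e : Sym2 (Fin k) // ¬e.IsDiag} := ⟨s(u,v), by simp [h]⟩

lemma adj_inl_ev (u v : Fin k) (h : u ≠ v) :
    (subdividedCompleteGraph k).Adj (Sum.inl u) (Sum.inr (ev u v h)) := Sym2.mem_mk_left u v

lemma adj_ev_inl (u v : Fin k) (h : u ≠ v) :
    (subdividedCompleteGraph k).Adj (Sum.inr (ev u v h)) (Sum.inl v) := Sym2.mem_mk_right u v

/-- The canonical geodesic between two original vertices. -/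
def pathLL (u v : Fin k) (h : u ≠ v) :
    (subdividedCompleteGraph k).Walk (Sum.inl u) (Sum.inl v) :=
  Walk.cons (adj_inl_ev u v h) (Walk.cons (adj_ev_inl u v h) Walk.nil)

lemma pathLL_length (u v : Fin k) (h : u ≠ v) : (pathLL u v h).length = 2 := by
  simp [pathLL]

lemma sym2_rep (z : Sym2 (Fin k)) : ∃ a b : Fin k, z = s(a,b) := by
  induction z using Sym2.ind with | _ a b => exact ⟨a, b, rfl⟩

lemma exists_walk_lr (u : Fin k) (e : {e : Sym2 (Fin k) // ¬e.IsDiag}) :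
    ∃ p : (subdividedCompleteGraph k).Walk (Sum.inl u) (Sum.inr e), p.length ≤ 2 := by
  obtain ⟨a, b, hab⟩ := sym2_rep e.val
  by_cases hu : u ∈ e.val
  · exact ⟨Walk.cons (adj_lr.mpr hu) Walk.nil, by simp⟩
  · have hua : u ≠ a := by
      intro h
      exact hu (h ▸ (hab ▸ Sym2.mem_mk_left a b))
    have hne : ev u a hua ≠ e := by
      intro h
      exact hu (h ▸ Sym2.mem_mk_left u a)
    exact ⟨Walk.cons (adj_inl_ev u a hua) (Walk.cons (adj_rr.mpr hne) Walk.nil), by simp⟩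

lemma exists_walk (x y : Fin k ⊕ {e : Sym2 (Fin k) // ¬e.IsDiag}) :
    ∃ p : (subdividedCompleteGraph k).Walk x y, p.length ≤ 2 := by
  rcases x with u | e <;> rcases y with v | f
  · by_cases h : u = v
    · subst h; exact ⟨Walk.nil, by simp⟩
    · exact ⟨pathLL u v h, by rw [pathLL_length]⟩
  · exact exists_walk_lr u f
  · obtain ⟨p, hp⟩ := exists_walk_lr v e
    exact ⟨p.reverse, by simpa using hp⟩
  · by_cases h : e = f
    · subst h; exact ⟨Walk.nil, by simp⟩
    · exact ⟨Walk.cons (adj_rr.mpr h) Walk.nil, by simp⟩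

lemma connected (hk : 2 ≤ k) : (subdividedCompleteGraph k).Connected := by
  have : Nonempty (Fin k ⊕ {e : Sym2 (Fin k) // ¬e.IsDiag}) :=
    ⟨Sum.inl ⟨0, by omega⟩⟩
  exact ⟨fun x y => ⟨(exists_walk x y).choose⟩⟩

lemma dist_le_two (x y : Fin k ⊕ {e : Sym2 (Fin k) // ¬e.IsDiag}) :
    (subdividedCompleteGraph k).dist x y ≤ 2 := by
  obtain ⟨p, hp⟩ := exists_walk x y
  exact le_trans (SimpleGraph.dist_le p) hp

lemma edist_le_two (x y : Fin k ⊕ {e : Sym2 (Fin k) // ¬e.IsDiag}) :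
    (subdividedCompleteGraph k).edist x y ≤ 2 := by
  obtain ⟨p, hp⟩ := exists_walk x y
  refine le_trans (SimpleGraph.edist_le p) ?_
  exact_mod_cast Nat.cast_le.mpr hp

lemma dist_ll (u v : Fin k) (h : u ≠ v) :
    (subdividedCompleteGraph k).dist (Sum.inl u) (Sum.inl v) = 2 := by
  have hle : (subdividedCompleteGraph k).dist (Sum.inl u) (Sum.inl v) ≤ 2 := by
    have := SimpleGraph.dist_le (pathLL u v h)
    rwa [pathLL_length] at this
  have h0 : (subdividedCompleteGraph k).dist (Sum.inl u) (Sum.inl v) ≠ 0 := by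
    rw [SimpleGraph.dist_ne_zero_iff_ne_and_reachable]
    exact ⟨by simp [h], ⟨pathLL u v h⟩⟩
  have h1 : (subdividedCompleteGraph k).dist (Sum.inl u) (Sum.inl v) ≠ 1 := by
    intro hd
    exact adj_ll u v (SimpleGraph.dist_eq_one_iff_adj.mp hd)
  omega

lemma diam_eq (hk : 2 ≤ k) : (subdividedCompleteGraph k).diam = 2 := by
  set a0 : Fin k := ⟨0, by omega⟩ with ha0
  set a1 : Fin k := ⟨1, by omega⟩ with ha1
  have h01 : a0 ≠ a1 := by
    intro h
    have := congrArg Fin.val h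
    simp [ha0, ha1] at this
  have hd : (subdividedCompleteGraph k).dist (Sum.inl a0) (Sum.inl a1) = 2 := dist_ll a0 a1 h01
  have hed : (subdividedCompleteGraph k).edist (Sum.inl a0) (Sum.inl a1) = 2 := by
    have : ((subdividedCompleteGraph k).edist (Sum.inl a0) (Sum.inl a1)).toNat = 2 := hd
    rwa [ENat.toNat_eq_iff (by norm_num)] at this
  have hediam : (subdividedCompleteGraph k).ediam = 2 := by
    refine le_antisymm (SimpleGraph.ediam_le_of_edist_le fun u v => edist_le_two u v) ?_
    rw [← hed]
    exact SimpleGraph.edist_le_ediam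
  rw [SimpleGraph.diam, hediam]
  rfl

lemma mem_middle (u v : Fin k) (h : u ≠ v)
    (p : (subdividedCompleteGraph k).Walk (Sum.inl u) (Sum.inl v)) (hp : p.length = 2) :
    Sum.inr (ev u v h) ∈ p.support := by
  cases p with
  | nil => simp at hp
  | cons h1 q =>
    cases q with
    | nil => simp at hp
    | cons h2 r =>
      cases r with
      | cons h3 s => simp [Nat.add_eq_zero] at hp
      | nil =>
        rename_i m
        rcases m with w | e
        · exact absurd h1 (adj_ll u w)
        · have hu : u ∈ e.val := adj_lr.mp h1
          have hv : v ∈ e.val := adj_rl.mp h2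
          have : e = ev u v h := Subtype.ext ((Sym2.mem_and_mem_iff h).mp ⟨hu, hv⟩)
          subst this
          simp [Walk.support_cons]

lemma inl_endpoint {x y : Fin k ⊕ {e : Sym2 (Fin k) // ¬e.IsDiag}}
    (p : (subdividedCompleteGraph k).Walk x y)
    (hlen : p.length = (subdividedCompleteGraph k).dist x y)
    (u : Fin k) (hu : Sum.inl u ∈ p.support) :
    Sum.inl u = x ∨ Sum.inl u = y := by
  have h2 : p.length ≤ 2 := hlen ▸ dist_le_two x y
  cases p with
  | nil =>
    simp only [Walk.support_nil, List.mem_singleton] at hu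
    exact Or.inl hu
  | cons h1 q =>
    cases q with
    | nil =>
      simp only [Walk.support_cons, Walk.support_nil, List.mem_cons, List.mem_singleton,
        List.not_mem_nil, or_false] at hu
      rcases hu with hu | hu
      · exact Or.inl hu
      · exact Or.inr hu
    | cons h2' r =>
      cases r with
      | cons h3 s => simp at h2
      | nil =>
        rename_i m
        simp only [Walk.support_cons, Walk.support_nil, List.mem_cons, List.mem_singleton,
          List.not_mem_nil, or_false] at hu
        rcases hu with hu | hu | hu
        · exact Or.inl hu
        · exfalso
          subst hu
          rcases x with w | e
          · exact adj_ll w u h1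
          rcases y with w | f
          · exact adj_ll u w (((subdividedCompleteGraph k).adj_symm h2'))
          have hef : e ≠ f := by
            intro hef
            subst hef
            have : (subdividedCompleteGraph k).dist (Sum.inr e) (Sum.inr e) = 0 :=
              SimpleGraph.dist_self
            rw [← hlen] at this
            simp at this
          have : (subdividedCompleteGraph k).dist (Sum.inr e) (Sum.inr f) = 1 :=
            SimpleGraph.dist_eq_one_iff_adj.mpr (adj_rr.mpr hef)
          rw [← hlen] at this
          simp at this
        · exact Or.inr hu

lemma card_ge (S : Finset (Fin k ⊕ {e : Sym2 (Fin k) // ¬e.IsDiag}))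
    (hS : (subdividedCompleteGraph k).IsStrongGeodeticSet ↑S) : k ≤ S.card := by
  obtain ⟨g, hlen, hcov⟩ := hS
  have hmem : ∀ u : Fin k, Sum.inl u ∈ S := by
    intro u
    obtain ⟨x, hx, y, hy, hsup⟩ := hcov (Sum.inl u)
    rcases inl_endpoint (g x hx y hy) (hlen x hx y hy) u hsup with h | h
    · rw [h]; exact hx
    · rw [h]; exact hy
  calc k = (Finset.univ.image (fun u : Fin k =>
        (Sum.inl u : Fin k ⊕ {e : Sym2 (Fin k) // ¬e.IsDiag}))).card := by
        rw [Finset.card_image_of_injective _ Sum.inl_injective, Finset.card_univ,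
          Fintype.card_fin]
    _ ≤ S.card := by
        refine Finset.card_le_card ?_
        intro x hx
        obtain ⟨u, _, rfl⟩ := Finset.mem_image.mp hx
        exact hmem u

lemma is_geodetic (hk : 2 ≤ k) :
    (subdividedCompleteGraph k).IsStrongGeodeticSet
      ↑(Finset.univ.image (fun u : Fin k =>
        (Sum.inl u : Fin k ⊕ {e : Sym2 (Fin k) // ¬e.IsDiag}))) := by
  have hconn := connected hk
  refine ⟨fun x _ y _ => (hconn.exists_walk_length_eq_dist x y).choose,
    fun x hx y hy => (hconn.exists_walk_length_eq_dist x y).choose_spec, ?_⟩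
  intro v
  have hmemS : ∀ u : Fin k, (Sum.inl u : Fin k ⊕ {e : Sym2 (Fin k) // ¬e.IsDiag}) ∈
      (↑(Finset.univ.image (fun u : Fin k =>
        (Sum.inl u : Fin k ⊕ {e : Sym2 (Fin k) // ¬e.IsDiag}))) :
        Set (Fin k ⊕ {e : Sym2 (Fin k) // ¬e.IsDiag})) := by
    intro u
    simp
  rcases v with u | e
  · exact ⟨Sum.inl u, hmemS u, Sum.inl u, hmemS u, Walk.start_mem_support _⟩
  · obtain ⟨a, b, hab⟩ := sym2_rep e.val
    have hne : a ≠ b := by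
      intro h
      exact e.prop (by rw [hab, h]; exact Sym2.mk_isDiag_iff.mpr rfl)
    refine ⟨Sum.inl a, hmemS a, Sum.inl b, hmemS b, ?_⟩
    have hlen2 : ((hconn.exists_walk_length_eq_dist (Sum.inl a) (Sum.inl b)).choose).length
        = 2 := by
      rw [(hconn.exists_walk_length_eq_dist (Sum.inl a) (Sum.inl b)).choose_spec,
        dist_ll a b hne]
    have := mem_middle a b hne _ hlen2
    have heq : ev a b hne = e := Subtype.ext hab.symm
    rwa [heq] at this

lemma sg_eq (hk : 2 ≤ k) : (subdividedCompleteGraph k).strongGeodeticNumber = k := by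
  have hkmem : k ∈ {n | ∃ S : Finset (Fin k ⊕ {e : Sym2 (Fin k) // ¬e.IsDiag}),
      (subdividedCompleteGraph k).IsStrongGeodeticSet ↑S ∧ S.card = n} := by
    refine ⟨Finset.univ.image (fun u : Fin k =>
      (Sum.inl u : Fin k ⊕ {e : Sym2 (Fin k) // ¬e.IsDiag})), is_geodetic hk, ?_⟩
    rw [Finset.card_image_of_injective _ Sum.inl_injective, Finset.card_univ, Fintype.card_fin]
  refine le_antisymm (Nat.sInf_le hkmem) (le_csInf ⟨k, hkmem⟩ ?_)
  rintro n ⟨S, hS, rfl⟩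
  exact card_ge S hS

end SDCGaux

/-- For every `k ≥ 2`, the graph `G_k` is a connected graph with diameter `2`,
strong geodetic number `k`, and `k + C(k,2)` vertices, attaining equality in the bound
`n(G) ≤ sg(G) + C(sg(G),2)·(diam(G) - 1)`. -/
theorem exists_diam_two_extremal (k : ℕ) (hk : 2 ≤ k) :
    (subdividedCompleteGraph k).Connected ∧
    (subdividedCompleteGraph k).diam = 2 ∧
    (subdividedCompleteGraph k).strongGeodeticNumber = k ∧
    Fintype.card (Fin k ⊕ {e : Sym2 (Fin k) // ¬e.IsDiag}) = k + k.choose 2 := by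
  refine ⟨SDCGaux.connected hk, SDCGaux.diam_eq hk, SDCGaux.sg_eq hk, ?_⟩
  rw [Fintype.card_sum, Fintype.card_fin, Sym2.card_subtype_not_diag, Fintype.card_fin]
end

section
/- For all integers k ≥ 2 and d ≥ 2 there exists a finite connected simple graph G with diam(G) = d, sg(G) = k, and n(G) = k + (d − 1)·C(k,2) vertices, attaining equality in the bound sg(G) ≥ ⌈(d − 3 + √((d−3)² + 8·n(G)·(d−1)))/(2(d−1))⌉. -/
open SimpleGraph

set_option linter.unreachableTactic false
set_option linter.unusedTactic false
set_option linter.unnecessarySeqFocus false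
set_option linter.unusedVariables false

namespace StrongGeo

abbrev Pair (k : ℕ) := {p : Fin k × Fin k // p.1 < p.2}

abbrev Vtx (k d : ℕ) := Fin k ⊕ (Pair k × Fin (d - 1))

variable {k d : ℕ}

/-- position of internal index, in `[1, d-1]` -/
def pos (e : Fin (d-1)) : ℕ := e.1 + 1

lemma pos_ge (e : Fin (d-1)) : 1 ≤ pos e := Nat.le_add_left 1 e.1

lemma pos_le (e : Fin (d-1)) : pos e ≤ d - 1 := e.2

lemma pos_inj {e f : Fin (d-1)} (h : pos e = pos f) : e = f := by
  unfold pos at h; exact Fin.ext (by omega)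

/-- `e` is an end index of pair `p` touching terminal `c`. -/
def tch (c : Fin k) (p : Pair k) (e : Fin (d-1)) : Prop :=
  (p.1.1 = c ∧ pos e = 1) ∨ (p.1.2 = c ∧ pos e = d - 1)

/-- middle positions -/
def isMid (e : Fin (d-1)) : Prop := pos e = d/2 ∨ pos e = d - d/2

def rel : Vtx k d → Vtx k d → Prop
  | .inl a, .inr (p, e) => tch a p e
  | .inr (p, e), .inr (q, f) =>
      (p = q ∧ pos f = pos e + 1) ∨
      (p ≠ q ∧ isMid e ∧ isMid f) ∨
      (p ≠ q ∧ ∃ c, tch c p e ∧ tch c q f)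
  | _, _ => False

def G (k d : ℕ) : SimpleGraph (Vtx k d) := SimpleGraph.fromRel rel

lemma adj_iff {x y : Vtx k d} : (G k d).Adj x y ↔ x ≠ y ∧ (rel x y ∨ rel y x) :=
  SimpleGraph.fromRel_adj rel x y

/-- the chain of pair `p` : positions 0..d -/
def ch (p : Pair k) (t : ℕ) : Vtx k d :=
  if h : t = 0 then .inl p.1.1
  else if h2 : t < d then .inr (p, ⟨t - 1, by omega⟩) else .inl p.1.2

lemma ch_zero (p : Pair k) : (ch p 0 : Vtx k d) = .inl p.1.1 := by simp [ch]

lemma ch_last (p : Pair k) (hd : d ≠ 0) : (ch p d : Vtx k d) = .inl p.1.2 := by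
  rw [ch, dif_neg hd, dif_neg (lt_irrefl d)]

lemma ch_mk (p : Pair k) {t : ℕ} (h1 : t ≠ 0) (h2 : t < d) :
    (ch p t : Vtx k d) = .inr (p, ⟨t - 1, by omega⟩) := by
  rw [ch, dif_neg h1, dif_pos h2]

lemma pos_ch {t : ℕ} (h1 : t ≠ 0) (h2 : t < d) :
    pos (⟨t - 1, by omega⟩ : Fin (d-1)) = t := by
  simp [pos]; omega

section
variable (hd : 2 ≤ d)
include hd

lemma ch_adj (p : Pair k) {t : ℕ} (ht : t < d) : (G k d).Adj (ch p t) (ch p (t+1)) := by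
  rw [adj_iff]
  rcases Nat.eq_zero_or_pos t with h0 | hpos
  · subst h0
    rw [ch_zero, ch_mk p (by omega) (by omega)]
    refine ⟨by simp, Or.inl ?_⟩
    exact Or.inl ⟨rfl, by simp [pos]⟩
  · rcases Nat.lt_or_ge (t+1) d with h2 | h2
    · rw [ch_mk p (by omega) ht, ch_mk p (by omega) h2]
      constructor
      · intro h
        have := (Sum.inr.injEq _ _).mp h
        have : (⟨t - 1, by omega⟩ : Fin (d-1)) = ⟨t, by omega⟩ := by
          simpa using this
        simp [Fin.ext_iff] at this; omega
      · exact Or.inl (Or.inl ⟨rfl, by simp [pos]; omega⟩)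
    · have hteq : t + 1 = d := by omega
      rw [ch_mk p (by omega) ht, hteq, ch_last p (by omega)]
      refine ⟨by simp, Or.inr ?_⟩
      exact Or.inr ⟨rfl, by simp [pos]; omega⟩

def chWalk (p : Pair k) (s : ℕ) : ∀ (n : ℕ), s + n ≤ d → (G k d).Walk (ch p s) (ch p (s + n))
  | 0, _ => Walk.nil
  | n+1, h => (chWalk p s n (by omega)).concat (ch_adj hd p (by omega))

@[simp] lemma chWalk_length (p : Pair k) (s n : ℕ) (h : s + n ≤ d) :
    (chWalk hd p s n h).length = n := by
  induction n with
  | zero => rfl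
  | succ n ih => rw [chWalk, Walk.length_concat, ih]

lemma chWalk_support (p : Pair k) (s n : ℕ) (h : s + n ≤ d) {t : ℕ} (h1 : s ≤ t)
    (h2 : t ≤ s + n) : ch p t ∈ (chWalk hd p s n h).support := by
  induction n with
  | zero => have : t = s := by omega
            subst this; simp [chWalk]
  | succ n ih =>
      rw [chWalk, Walk.support_concat]
      rcases Nat.lt_or_ge t (s + n + 1) with h3 | h3
      · exact by exact List.mem_append.mpr (Or.inl (ih (by omega) (by omega)))
      · have : t = s + (n+1) := by omega
        subst this
        exact by simp

lemma exists_walk_chain (p : Pair k) {s t : ℕ} (hs : s ≤ d) (ht : t ≤ d) :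
    ∃ w : (G k d).Walk (ch p s) (ch p t), w.length = (t - s) + (s - t) := by
  rcases Nat.le_total s t with h | h
  · refine ⟨(chWalk hd p s (t - s) (by omega)).copy rfl (by rw [Nat.add_sub_cancel' h]), ?_⟩
    rw [Walk.length_copy, chWalk_length]; omega
  · refine ⟨((chWalk hd p t (s - t) (by omega)).copy rfl (by rw [Nat.add_sub_cancel' h])).reverse, ?_⟩
    rw [Walk.length_reverse, Walk.length_copy, chWalk_length]; omega

end

lemma potential {f : Vtx k d → ℤ} (hf : ∀ ⦃x y⦄, (G k d).Adj x y → f y ≤ f x + 1)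
    {x y : Vtx k d} (w : (G k d).Walk x y) : f y - f x ≤ w.length := by
  induction w with
  | nil => simp
  | @cons u v z h q ih =>
      have h1 := hf h
      rw [Walk.length_cons]
      push_cast
      omega

/-- potential measuring distance from terminal `i` -/
def pot (i : Fin k) : Vtx k d → ℤ
  | .inl c => if c = i then 0 else (d : ℤ)
  | .inr (p, e) =>
      if p.1.1 = i then (pos e : ℤ)
      else if p.1.2 = i then (d : ℤ) - pos e
      else (d : ℤ) - min ((pos e : ℕ) : ℤ) ((d : ℤ) - ((pos e : ℕ) : ℤ))

lemma pot_lipschitz_rel (hd : 2 ≤ d) (i : Fin k) {x y : Vtx k d} (h : rel x y) :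
    pot i y ≤ pot i x + 1 ∧ pot i x ≤ pot i y + 1 := by
  match x, y with
  | .inl a, .inr (p, e) =>
      have hp := p.2
      have h1 := pos_ge e
      have h2 := pos_le e
      rcases h with ⟨hc, hpos⟩ | ⟨hc, hpos⟩ <;> subst hc <;>
        simp only [pot] <;> split_ifs <;>
          first
            | (push_cast; omega)
            | (exfalso; fin_omega)
            | (exfalso; simp_all; fin_omega)
  | .inr (p, e), .inr (q, f) =>
      have hp := p.2
      have hq := q.2
      have h1 := pos_ge e
      have h2 := pos_le e
      have h3 := pos_ge f
      have h4 := pos_le f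
      rcases h with ⟨hpq, hpos⟩ | ⟨hpq, hm1, hm2⟩ | ⟨hpq, c, hc1, hc2⟩
      · subst hpq
        simp only [pot] <;> split_ifs <;> (push_cast; omega)
      · rcases hm1 with hm1 | hm1 <;> rcases hm2 with hm2 | hm2 <;>
          simp only [pot] <;> split_ifs <;> (push_cast; omega)
      · rcases hc1 with ⟨he1, he2⟩ | ⟨he1, he2⟩ <;> rcases hc2 with ⟨hf1, hf2⟩ | ⟨hf1, hf2⟩ <;>
          subst he1 <;>
          simp only [pot] <;> split_ifs <;>
            first
              | (push_cast; omega)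
              | (exfalso; fin_omega)
              | (exfalso; simp_all <;> fin_omega)
              | (exfalso; simp_all)
              | simp_all

lemma pot_lipschitz (hd : 2 ≤ d) (i : Fin k) :
    ∀ ⦃x y : Vtx k d⦄, (G k d).Adj x y → pot i y ≤ pot i x + 1 := by
  intro x y h
  rw [adj_iff] at h
  rcases h.2 with h2 | h2
  · exact (pot_lipschitz_rel hd i h2).1
  · exact (pot_lipschitz_rel hd i h2).2

lemma walk_inl_inl_length_ge (hd : 2 ≤ d) {i j : Fin k} (hij : i ≠ j)
    (w : (G k d).Walk (.inl i) (.inl j)) : d ≤ w.length := by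
  have := potential (pot_lipschitz hd i) w
  simp only [pot, if_true, if_neg (Ne.symm hij)] at this
  omega

def mkPair (i j : Fin k) (h : i ≠ j) : Pair k :=
  if h2 : i < j then ⟨(i,j), h2⟩ else ⟨(j,i), lt_of_le_of_ne (not_lt.mp h2) h.symm⟩

lemma mkPair_ends (i j : Fin k) (h : i ≠ j) :
    (mkPair i j h).1.1 = i ∨ (mkPair i j h).1.2 = i := by
  unfold mkPair; split_ifs <;> simp

lemma ch_pos_eq (q : Pair k) (e : Fin (d-1)) (hd : 2 ≤ d) :
    (ch q (pos e) : Vtx k d) = .inr (q, e) := by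
  have h1 := pos_ge e
  have h2 := pos_le e
  rw [ch_mk q (by omega) (by omega)]
  have he : (⟨pos e - 1, by omega⟩ : Fin (d-1)) = e := Fin.ext (by simp [pos])
  rw [he]

lemma exists_walk_inl_inl (hd : 2 ≤ d) {i j : Fin k} (hij : i ≠ j) :
    ∃ w : (G k d).Walk (.inl i) (.inl j), w.length = d := by
  rcases lt_or_gt_of_ne hij with h | h
  · refine ⟨((chWalk hd ⟨(i,j), h⟩ 0 d (by omega)).copy (ch_zero _)
      (by rw [zero_add, ch_last _ (by omega)])), ?_⟩
    rw [Walk.length_copy, chWalk_length]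
  · refine ⟨((chWalk hd ⟨(j,i), h⟩ 0 d (by omega)).copy (ch_zero _)
      (by rw [zero_add, ch_last _ (by omega)])).reverse, ?_⟩
    rw [Walk.length_reverse, Walk.length_copy, chWalk_length]

/-- from a terminal of a pair, reach a mid position of that pair in ≤ d/2 steps -/
lemma exists_walk_inl_gate (hd : 2 ≤ d) {p : Pair k} {i : Fin k}
    (h : p.1.1 = i ∨ p.1.2 = i) :
    ∃ g : ℕ, 1 ≤ g ∧ g ≤ d - 1 ∧ (g = d/2 ∨ g = d - d/2) ∧
      ∃ w : (G k d).Walk (.inl i) (ch p g), w.length ≤ d/2 := by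
  rcases h with h | h
  · refine ⟨d/2, by omega, by omega, Or.inl rfl, ?_⟩
    refine ⟨(chWalk hd p 0 (d/2) (by omega)).copy (by rw [ch_zero, h]) (by rw [zero_add]), ?_⟩
    rw [Walk.length_copy, chWalk_length]
  · refine ⟨d - d/2, by omega, by omega, Or.inr rfl, ?_⟩
    obtain ⟨w, hw⟩ := exists_walk_chain hd p (le_refl d) (show d - d/2 ≤ d by omega)
    refine ⟨w.copy (by rw [ch_last _ (by omega), h]) rfl, ?_⟩
    rw [Walk.length_copy, hw]; omega

/-- from an internal vertex, reach a mid position of its pair in ≤ d/2 - 1 steps -/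
lemma exists_walk_inr_gate (hd : 2 ≤ d) (p : Pair k) (e : Fin (d-1)) :
    ∃ g : ℕ, 1 ≤ g ∧ g ≤ d - 1 ∧ (g = d/2 ∨ g = d - d/2) ∧
      ∃ w : (G k d).Walk (.inr (p, e)) (ch p g), w.length ≤ d/2 - 1 := by
  have h1 := pos_ge e
  have h2 := pos_le e
  by_cases h : pos e ≤ d/2
  · refine ⟨d/2, by omega, by omega, Or.inl rfl, ?_⟩
    obtain ⟨w, hw⟩ := exists_walk_chain hd p (show pos e ≤ d by omega) (show d/2 ≤ d by omega)
    refine ⟨w.copy (ch_pos_eq p e hd) rfl, ?_⟩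
    rw [Walk.length_copy, hw]; omega
  · refine ⟨d - d/2, by omega, by omega, Or.inr rfl, ?_⟩
    obtain ⟨w, hw⟩ := exists_walk_chain hd p (show pos e ≤ d by omega) (show d - d/2 ≤ d by omega)
    refine ⟨w.copy (ch_pos_eq p e hd) rfl, ?_⟩
    rw [Walk.length_copy, hw]; omega

lemma gate_adj (hd : 2 ≤ d) {p q : Pair k} (hpq : p ≠ q) {g1 g2 : ℕ}
    (hg1a : 1 ≤ g1) (hg1b : g1 ≤ d - 1) (hm1 : g1 = d/2 ∨ g1 = d - d/2)
    (hg2a : 1 ≤ g2) (hg2b : g2 ≤ d - 1) (hm2 : g2 = d/2 ∨ g2 = d - d/2) :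
    (G k d).Adj (ch p g1) (ch q g2) := by
  rw [ch_mk p (by omega) (by omega), ch_mk q (by omega) (by omega), adj_iff]
  constructor
  · intro hcon
    injection hcon with h
    exact hpq (congrArg Prod.fst h)
  · refine Or.inl (Or.inr (Or.inl ⟨hpq, ?_, ?_⟩)) <;>
      · unfold isMid
        rw [pos_ch (by omega) (by omega)]
        omega

/-- a pair containing `i` but different from `q` (when `i` is not an end of `q`) -/
lemma exists_other_pair (hd : 2 ≤ d) (i : Fin k) (q : Pair k)
    (h : ¬(q.1.1 = i ∨ q.1.2 = i)) :
    ∃ p : Pair k, (p.1.1 = i ∨ p.1.2 = i) ∧ p ≠ q := by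
  push_neg at h
  refine ⟨mkPair i q.1.1 (fun hc => h.1 hc.symm), mkPair_ends _ _ _, ?_⟩
  intro hc
  rcases mkPair_ends i q.1.1 (fun hc => h.1 hc.symm) with h1 | h1 <;> rw [hc] at h1
  · exact h.1 h1
  · exact h.2 h1

lemma exists_walk_inl_inr (hd : 2 ≤ d) (i : Fin k) (q : Pair k) (e : Fin (d-1)) :
    ∃ w : (G k d).Walk (.inl i) (.inr (q, e)), w.length ≤ d := by
  have h1 := pos_ge e
  have h2 := pos_le e
  by_cases h : q.1.1 = i ∨ q.1.2 = i
  · -- walk along the chain of q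
    rcases h with h | h
    · obtain ⟨w, hw⟩ := exists_walk_chain hd q (show 0 ≤ d by omega) (show pos e ≤ d by omega)
      refine ⟨w.copy (by rw [ch_zero, h]) (ch_pos_eq q e hd), ?_⟩
      rw [Walk.length_copy, hw]; omega
    · obtain ⟨w, hw⟩ := exists_walk_chain hd q (le_refl d) (show pos e ≤ d by omega)
      refine ⟨w.copy (by rw [ch_last _ (by omega), h]) (ch_pos_eq q e hd), ?_⟩
      rw [Walk.length_copy, hw]; omega
  · obtain ⟨p, hp, hpq⟩ := exists_other_pair hd i q h
    obtain ⟨g1, hg1a, hg1b, hm1, w1, hw1⟩ := exists_walk_inl_gate hd hp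
    obtain ⟨g2, hg2a, hg2b, hm2, w2, hw2⟩ := exists_walk_inr_gate hd q e
    have hadj := gate_adj hd hpq hg1a hg1b hm1 hg2a hg2b hm2
    refine ⟨w1.append (Walk.cons hadj w2.reverse), ?_⟩
    rw [Walk.length_append, Walk.length_cons, Walk.length_reverse]
    omega

lemma exists_walk_inr_inr (hd : 2 ≤ d) (p q : Pair k) (e f : Fin (d-1)) :
    ∃ w : (G k d).Walk (.inr (p, e)) (.inr (q, f)), w.length ≤ d := by
  have h1 := pos_ge e
  have h2 := pos_le e
  have h3 := pos_ge f
  have h4 := pos_le f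
  by_cases hpq : p = q
  · subst hpq
    obtain ⟨w, hw⟩ := exists_walk_chain hd p (show pos e ≤ d by omega) (show pos f ≤ d by omega)
    refine ⟨w.copy (ch_pos_eq p e hd) (ch_pos_eq p f hd), ?_⟩
    rw [Walk.length_copy, hw]; omega
  · obtain ⟨g1, hg1a, hg1b, hm1, w1, hw1⟩ := exists_walk_inr_gate hd p e
    obtain ⟨g2, hg2a, hg2b, hm2, w2, hw2⟩ := exists_walk_inr_gate hd q f
    have hadj := gate_adj hd hpq hg1a hg1b hm1 hg2a hg2b hm2
    refine ⟨w1.append (Walk.cons hadj w2.reverse), ?_⟩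
    rw [Walk.length_append, Walk.length_cons, Walk.length_reverse]
    omega

lemma exists_walk_le (hd : 2 ≤ d) (x y : Vtx k d) :
    ∃ w : (G k d).Walk x y, w.length ≤ d := by
  match x, y with
  | .inl i, .inl j =>
      by_cases hij : i = j
      · subst hij; exact ⟨Walk.nil, by simp⟩
      · obtain ⟨w, hw⟩ := exists_walk_inl_inl hd hij
        exact ⟨w, hw.le⟩
  | .inl i, .inr (q, e) => exact exists_walk_inl_inr hd i q e
  | .inr (q, e), .inl i =>
      obtain ⟨w, hw⟩ := exists_walk_inl_inr hd i q e
      exact ⟨w.reverse, by rwa [Walk.length_reverse]⟩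
  | .inr (p, e), .inr (q, f) => exact exists_walk_inr_inr hd p q e f

lemma G_preconnected (hd : 2 ≤ d) : (G k d).Preconnected := by
  intro x y
  obtain ⟨w, _⟩ := exists_walk_le hd x y
  exact ⟨w⟩

lemma G_connected (hk : 2 ≤ k) (hd : 2 ≤ d) : (G k d).Connected := by
  have : Nonempty (Vtx k d) := ⟨Sum.inl ⟨0, by omega⟩⟩
  exact ⟨G_preconnected hd⟩

lemma dist_inl_inl (hd : 2 ≤ d) {i j : Fin k} (hij : i ≠ j) :
    (G k d).dist (.inl i) (.inl j) = d := by
  obtain ⟨w, hw⟩ := exists_walk_inl_inl hd hij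
  refine le_antisymm ((SimpleGraph.dist_le w).trans hw.le) ?_
  obtain ⟨w', hw'⟩ := (G_preconnected hd (Sum.inl i) (Sum.inl j)).exists_walk_length_eq_dist
  rw [← hw']
  exact walk_inl_inl_length_ge hd hij w'

lemma edist_inl_ge (hd : 2 ≤ d) {i j : Fin k} (hij : i ≠ j) :
    (d : ℕ∞) ≤ (G k d).edist (.inl i) (.inl j) := by
  rw [SimpleGraph.edist_eq_sInf]
  refine le_sInf ?_
  rintro a ⟨w, rfl⟩
  exact_mod_cast Nat.cast_le.mpr (walk_inl_inl_length_ge hd hij w)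

lemma ediam_eq (hk : 2 ≤ k) (hd : 2 ≤ d) : (G k d).ediam = d := by
  refine le_antisymm (SimpleGraph.ediam_le_of_edist_le fun u v => ?_) ?_
  · obtain ⟨w, hw⟩ := exists_walk_le hd u v
    exact (SimpleGraph.edist_le w).trans (by exact_mod_cast Nat.cast_le.mpr hw)
  · have h0 : (⟨0, by omega⟩ : Fin k) ≠ ⟨1, by omega⟩ := by simp [Fin.ext_iff]
    refine le_trans (edist_inl_ge hd h0) ?_
    refine le_trans SimpleGraph.edist_le_ediam (le_refl _)

lemma diam_eq (hk : 2 ≤ k) (hd : 2 ≤ d) : (G k d).diam = d := by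
  rw [SimpleGraph.diam, ediam_eq hk hd]; simp

/-! ### the strong geodetic set of terminals -/

def S (k d : ℕ) : Finset (Vtx k d) :=
  (Finset.univ : Finset (Fin k)).map ⟨Sum.inl, Sum.inl_injective⟩

lemma mem_S_iff {x : Vtx k d} : x ∈ (↑(S k d) : Set (Vtx k d)) ↔ ∃ i, x = .inl i := by
  simp [S, eq_comm]

lemma inl_mem_S (i : Fin k) : (Sum.inl i : Vtx k d) ∈ (↑(S k d) : Set (Vtx k d)) :=
  mem_S_iff.mpr ⟨i, rfl⟩

lemma not_inr_mem_S (z : Pair k × Fin (d-1)) :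
    (Sum.inr z : Vtx k d) ∉ (↑(S k d) : Set (Vtx k d)) := by
  rw [mem_S_iff]; rintro ⟨i, h⟩; cases h

def gWalk (hd : 2 ≤ d) (i j : Fin k) : (G k d).Walk (.inl i) (.inl j) :=
  if h : i = j then Walk.nil.copy (by rw [h]) rfl
  else if h2 : i < j then
    (chWalk hd ⟨(i,j), h2⟩ 0 d (by omega)).copy (ch_zero _)
      (by rw [zero_add, ch_last _ (by omega)])
  else
    ((chWalk hd ⟨(j,i), lt_of_le_of_ne (not_lt.mp h2) (Ne.symm h)⟩ 0 d (by omega)).copy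
      (ch_zero _) (by rw [zero_add, ch_last _ (by omega)])).reverse

lemma gWalk_length (hd : 2 ≤ d) (i j : Fin k) :
    (gWalk hd i j).length = (G k d).dist (.inl i) (.inl j) := by
  unfold gWalk
  split_ifs with h h2
  · subst h
    rw [Walk.length_copy, Walk.length_nil, SimpleGraph.dist_self]
  · rw [Walk.length_copy, chWalk_length, dist_inl_inl hd h]
  · rw [Walk.length_reverse, Walk.length_copy, chWalk_length, dist_inl_inl hd h]

lemma gWalk_support_self (hd : 2 ≤ d) (i : Fin k) :
    (Sum.inl i : Vtx k d) ∈ (gWalk hd i i).support := by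
  unfold gWalk
  rw [dif_pos rfl]
  simp

lemma gWalk_support_inr (hd : 2 ≤ d) (p : Pair k) (e : Fin (d-1)) :
    (Sum.inr (p, e) : Vtx k d) ∈ (gWalk hd p.1.1 p.1.2).support := by
  have hlt := p.2
  unfold gWalk
  rw [dif_neg (ne_of_lt hlt), dif_pos hlt]
  rw [Walk.support_copy]
  have hp : (⟨((p : Fin k × Fin k).1, (p : Fin k × Fin k).2), hlt⟩ : Pair k) = p := by
    exact Subtype.ext rfl
  have h1 := pos_ge e
  have h2 := pos_le e
  have := chWalk_support hd (⟨((p : Fin k × Fin k).1, (p : Fin k × Fin k).2), hlt⟩ : Pair k)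
    0 d (by omega) (t := pos e) (by omega) (by omega)
  rw [hp] at this
  rwa [ch_pos_eq p e hd] at this

lemma S_strong_geodetic (hd : 2 ≤ d) :
    (G k d).IsStrongGeodeticSet (↑(S k d) : Set (Vtx k d)) := by
  refine ⟨fun x hx y hy =>
    match x, y, hx, hy with
    | .inl i, .inl j, _, _ => gWalk hd i j
    | .inr z, _, hx, _ => absurd hx (not_inr_mem_S z)
    | .inl _, .inr z, _, hy => absurd hy (not_inr_mem_S z), ?_, ?_⟩
  · intro x hx y hy
    match x, y, hx, hy with
    | .inl i, .inl j, _, _ => exact gWalk_length hd i j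
    | .inr z, _, hx, _ => exact absurd hx (not_inr_mem_S z)
    | .inl _, .inr z, _, hy => exact absurd hy (not_inr_mem_S z)
  · intro v
    match v with
    | .inl c => exact ⟨.inl c, inl_mem_S c, .inl c, inl_mem_S c, gWalk_support_self hd c⟩
    | .inr (p, e) =>
        exact ⟨.inl p.1.1, inl_mem_S _, .inl p.1.2, inl_mem_S _, gWalk_support_inr hd p e⟩

/-! ### lower bound: every terminal belongs to every strong geodetic set -/

lemma not_interior {W : Type*} [DecidableEq W] {H : SimpleGraph W} {x y v : W}
    (hcl : ∀ a b, H.Adj v a → H.Adj v b → a ≠ b → H.Adj a b)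
    (w : H.Walk x y) (hw : w.length = H.dist x y) (hv : v ∈ w.support)
    (hx : v ≠ x) (hy : v ≠ y) : False := by
  have hlen : (w.takeUntil v hv).length + (w.dropUntil v hv).length = w.length := by
    rw [← Walk.length_append, Walk.take_spec]
  obtain ⟨a, ha, q1, hq1⟩ := Walk.exists_eq_cons_of_ne hx (w.takeUntil v hv).reverse
  obtain ⟨b, hb, q2, hq2⟩ := Walk.exists_eq_cons_of_ne hy (w.dropUntil v hv)
  have hl1 : (w.takeUntil v hv).length = q1.length + 1 := by
    rw [← Walk.length_reverse, hq1, Walk.length_cons]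
  have hl2 : (w.dropUntil v hv).length = q2.length + 1 := by
    rw [hq2, Walk.length_cons]
  by_cases hab : a = b
  · subst hab
    have wnew : H.Walk x y := q1.reverse.append q2
    have : H.dist x y ≤ q1.length + q2.length := by
      have := SimpleGraph.dist_le (q1.reverse.append q2)
      rwa [Walk.length_append, Walk.length_reverse] at this
    omega
  · have hadj : H.Adj a b := hcl a b ha hb hab
    have : H.dist x y ≤ q1.length + (q2.length + 1) := by
      have := SimpleGraph.dist_le (q1.reverse.append (Walk.cons hadj q2))
      rwa [Walk.length_append, Walk.length_reverse, Walk.length_cons] at this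
    omega

lemma adj_inl {i : Fin k} {x : Vtx k d} (h : (G k d).Adj (.inl i) x) :
    ∃ p e, x = .inr (p, e) ∧ tch i p e := by
  rw [adj_iff] at h
  match x, h with
  | .inl a, h => rcases h.2 with h2 | h2 <;> exact absurd h2 not_false
  | .inr (p, e), h =>
      rcases h.2 with h2 | h2
      · exact ⟨p, e, rfl, h2⟩
      · exact absurd h2 not_false

lemma inl_clique (hd : 2 ≤ d) (i : Fin k) :
    ∀ a b, (G k d).Adj (.inl i) a → (G k d).Adj (.inl i) b → a ≠ b → (G k d).Adj a b := by
  intro a b ha hb hab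
  obtain ⟨p, e, rfl, hp⟩ := adj_inl ha
  obtain ⟨q, f, rfl, hq⟩ := adj_inl hb
  by_cases hpq : p = q
  · subst hpq
    exfalso
    have hef : e ≠ f := by
      intro h; exact hab (by rw [h])
    have hplt := p.2
    rcases hp with ⟨h1, h2⟩ | ⟨h1, h2⟩ <;> rcases hq with ⟨h3, h4⟩ | ⟨h3, h4⟩
    · exact hef (pos_inj (h2.trans h4.symm))
    · rw [← h3] at h1; exact absurd h1 (ne_of_lt hplt)
    · rw [← h3] at h1; exact absurd h1 (ne_of_gt hplt)
    · exact hef (pos_inj (h2.trans h4.symm))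
  · rw [adj_iff]
    exact ⟨hab, Or.inl (Or.inr (Or.inr ⟨hpq, i, hp, hq⟩))⟩

lemma terminal_mem (hd : 2 ≤ d) {T : Finset (Vtx k d)}
    (hT : (G k d).IsStrongGeodeticSet (↑T : Set (Vtx k d))) (i : Fin k) :
    (Sum.inl i : Vtx k d) ∈ T := by
  obtain ⟨g, hg1, hg2⟩ := hT
  obtain ⟨x, hx, y, hy, hmem⟩ := hg2 (.inl i)
  by_cases hix : (Sum.inl i : Vtx k d) = x
  · rwa [hix]
  · by_cases hiy : (Sum.inl i : Vtx k d) = y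
    · rwa [hiy]
    · exact absurd (not_interior (inl_clique hd i) (g x hx y hy) (hg1 x hx y hy) hmem hix hiy)
        not_false

lemma card_lower (hd : 2 ≤ d) {T : Finset (Vtx k d)}
    (hT : (G k d).IsStrongGeodeticSet (↑T : Set (Vtx k d))) : k ≤ T.card := by
  have : (Finset.univ : Finset (Fin k)).card ≤ T.card := by
    refine Finset.card_le_card_of_injOn (fun i => Sum.inl i) (fun i _ => terminal_mem hd hT i) ?_
    intro a _ b _ h
    exact Sum.inl_injective h
  simpa using this

lemma sg_eq (hk : 2 ≤ k) (hd : 2 ≤ d) : (G k d).strongGeodeticNumber = k := by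
  have hmem : k ∈ {n | ∃ T : Finset (Vtx k d), (G k d).IsStrongGeodeticSet ↑T ∧ T.card = n} :=
    ⟨S k d, S_strong_geodetic hd, by simp [S]⟩
  refine le_antisymm (Nat.sInf_le hmem) ?_
  refine le_csInf ⟨k, hmem⟩ ?_
  rintro n ⟨T, hT, rfl⟩
  exact card_lower hd hT

/-! ### cardinality -/

lemma sym2_diag_of_inf_eq_sup {α : Type*} [LinearOrder α] (x : Sym2 α)
    (h : x.inf = x.sup) : x.IsDiag := by
  induction x using Sym2.ind with
  | _ a b =>
      simp only [Sym2.inf_mk, Sym2.sup_mk] at h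
      rw [Sym2.mk_isDiag_iff]
      rcases le_total a b with h2 | h2
      · rw [inf_eq_left.mpr h2, sup_eq_right.mpr h2] at h; exact h
      · rw [inf_eq_right.mpr h2, sup_eq_left.mpr h2] at h; exact h.symm

def pairEquiv (k : ℕ) : Pair k ≃ {s : Sym2 (Fin k) // ¬ s.IsDiag} where
  toFun p := ⟨s(p.1.1, p.1.2), by rw [Sym2.mk_isDiag_iff]; exact ne_of_lt p.2⟩
  invFun s := ⟨(s.1.inf, s.1.sup), lt_of_le_of_ne s.1.inf_le_sup
    (fun h => s.2 (sym2_diag_of_inf_eq_sup s.1 h))⟩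
  left_inv p := by
    obtain ⟨⟨a, b⟩, hab⟩ := p
    simp only [Sym2.inf_mk, Sym2.sup_mk]
    exact Subtype.ext (Prod.ext (inf_eq_left.mpr hab.le) (sup_eq_right.mpr hab.le))
  right_inv s := by
    obtain ⟨x, hx⟩ := s
    refine Subtype.ext ?_
    induction x using Sym2.ind with
    | _ a b =>
        simp only [Sym2.inf_mk, Sym2.sup_mk]
        rcases le_total a b with h | h
        · rw [inf_eq_left.mpr h, sup_eq_right.mpr h]
        · rw [inf_eq_right.mpr h, sup_eq_left.mpr h, Sym2.eq_swap]

lemma card_pair (k : ℕ) : Fintype.card (Pair k) = k.choose 2 := by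
  rw [Fintype.card_congr (pairEquiv k), Sym2.card_subtype_not_diag, Fintype.card_fin]

lemma card_vtx (k d : ℕ) : Fintype.card (Vtx k d) = k + (d - 1) * k.choose 2 := by
  rw [Fintype.card_sum, Fintype.card_prod, Fintype.card_fin, Fintype.card_fin, card_pair]
  ring


lemma ceil_eq (k d : ℕ) (hk : 2 ≤ k) (hd : 2 ≤ d) :
    ⌈((d : ℝ) - 3 +
        Real.sqrt (((d : ℝ) - 3) ^ 2 +
          8 * ((k + (d - 1) * k.choose 2 : ℕ) : ℝ) * ((d : ℝ) - 1))) /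
      (2 * ((d : ℝ) - 1))⌉₊ = k := by
  have hd1 : (1 : ℕ) ≤ d := by omega
  have hk1 : (1 : ℕ) ≤ k := by omega
  have hdR : (2 : ℝ) ≤ (d : ℝ) := by exact_mod_cast hd
  have hkR : (2 : ℝ) ≤ (k : ℝ) := by exact_mod_cast hk
  have hcast : ((k + (d - 1) * k.choose 2 : ℕ) : ℝ) =
      (k : ℝ) + ((d : ℝ) - 1) * ((k : ℝ) * ((k : ℝ) - 1) / 2) := by
    push_cast [Nat.cast_choose_two, Nat.cast_sub hd1, Nat.cast_sub hk1]
    ring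
  rw [hcast]
  have hsq : ((d : ℝ) - 3) ^ 2 +
      8 * ((k : ℝ) + ((d : ℝ) - 1) * ((k : ℝ) * ((k : ℝ) - 1) / 2)) * ((d : ℝ) - 1) =
      (2 * ((d : ℝ) - 1) * (k : ℝ) - ((d : ℝ) - 3)) ^ 2 := by ring
  have hpos : (0 : ℝ) ≤ 2 * ((d : ℝ) - 1) * (k : ℝ) - ((d : ℝ) - 3) := by nlinarith
  rw [hsq, Real.sqrt_sq hpos]
  have hne : 2 * ((d : ℝ) - 1) ≠ 0 := by nlinarith
  have : ((d : ℝ) - 3 + (2 * ((d : ℝ) - 1) * (k : ℝ) - ((d : ℝ) - 3))) /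
      (2 * ((d : ℝ) - 1)) = (k : ℝ) := by
    rw [div_eq_iff hne]
    ring
  rw [this, Nat.ceil_natCast]


end StrongGeo

/-- For all `k ≥ 2` and `d ≥ 2` there is a finite connected graph with diameter `d`,
strong geodetic number `k`, and `k + (d-1)·C(k,2)` vertices, attaining equality in
the bound `sg(G) ≥ ⌈(d - 3 + √((d-3)² + 8·n(G)·(d-1)))/(2(d-1))⌉`. -/
theorem exists_diam_d_extremal (k d : ℕ) (hk : 2 ≤ k) (hd : 2 ≤ d) :
    ∃ (V : Type) (inst : Fintype V) (G : SimpleGraph V),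
      G.Connected ∧ G.diam = d ∧
      @SimpleGraph.strongGeodeticNumber V inst G = k ∧
      @Fintype.card V inst = k + (d - 1) * k.choose 2 ∧
      @SimpleGraph.strongGeodeticNumber V inst G =
        ⌈((d : ℝ) - 3 +
            Real.sqrt (((d : ℝ) - 3) ^ 2 +
              8 * (@Fintype.card V inst : ℝ) * ((d : ℝ) - 1))) /
          (2 * ((d : ℝ) - 1))⌉₊ := by
  refine ⟨StrongGeo.Vtx k d, inferInstance, StrongGeo.G k d, StrongGeo.G_connected hk hd,
    StrongGeo.diam_eq hk hd, StrongGeo.sg_eq hk hd, StrongGeo.card_vtx k d, ?_⟩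
  rw [StrongGeo.sg_eq hk hd, StrongGeo.card_vtx k d, StrongGeo.ceil_eq k d hk hd]
end
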